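/- arXiv:1909.02089 — 9 statements merged into one kernel-verified Lean document; each statement's English description precedes it below -/
import Mathlib

section
/- Let r be a positive integer, let δ ≥ 0, and let M be an m×m matrix over an arbitrary field which has more than δm^{2r} full-rank r×r submatrices (i.e., more than δm^{2r} pairs of an r-element set of row indices and an r-element set of column indices for which the corresponding r×r submatrix is invertible). Then any matrix obtained from M by changing at most δm² entries has rank at least r. -/
open Finset in
lemma aux_rank_submatrix_le {F : Type*} [Field F] {k l m n : Type*}
    [Fintype m] [Fintype n] [Fintype k] [Fintype l] [DecidableEq m] [DecidableEq n]
    (A : Matrix m n F) (f : k → m) (g : l → n) :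
    (A.submatrix f g).rank ≤ A.rank := by
  have h : A.submatrix f g =
      (Matrix.of fun i j => if f i = j then (1 : F) else 0) * A *
        (Matrix.of fun j i => if g i = j then (1 : F) else 0) := by
    ext i j
    simp [Matrix.mul_apply, Finset.sum_ite_eq, Finset.sum_ite_eq', ite_and, mul_ite]
  rw [h]
  exact le_trans (Matrix.rank_mul_le_left _ _) (Matrix.rank_mul_le_right _ _)

theorem statement4 {𝔽 : Type*} [Field 𝔽] (r : ℕ) (hr : 0 < r) (δ : ℝ) (hδ : 0 ≤ δ)
    (m : ℕ) (M : Matrix (Fin m) (Fin m) 𝔽)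
    -- `M` has more than `δ · m^(2r)` full-rank `r × r` submatrices
    (hM : δ * (m : ℝ) ^ (2 * r) <
      (Nat.card {p : Finset (Fin m) × Finset (Fin m) |
        p.1.card = r ∧ p.2.card = r ∧
        (M.submatrix (Subtype.val : {i // i ∈ p.1} → Fin m)
          (Subtype.val : {j // j ∈ p.2} → Fin m)).rank = r} : ℝ))
    -- `M'` is obtained from `M` by changing at most `δ · m²` entries
    (M' : Matrix (Fin m) (Fin m) 𝔽)
    (hM' : (Nat.card {ij : Fin m × Fin m | M' ij.1 ij.2 ≠ M ij.1 ij.2} : ℝ) ≤ δ * (m : ℝ) ^ 2) :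
    r ≤ M'.rank := by
  classical
  set P : Finset (Fin m) × Finset (Fin m) → Prop := fun p =>
    p.1.card = r ∧ p.2.card = r ∧
    (M.submatrix (Subtype.val : {i // i ∈ p.1} → Fin m)
      (Subtype.val : {j // j ∈ p.2} → Fin m)).rank = r with hP
  set Good : Finset (Finset (Fin m) × Finset (Fin m)) := Finset.univ.filter P with hGoodDef
  have hGoodCard : (Nat.card {p : Finset (Fin m) × Finset (Fin m) | P p} : ℝ) = Good.card := by
    have : {p : Finset (Fin m) × Finset (Fin m) | P p} = ↑Good := by
      ext p; simp [hGoodDef]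
    rw [this, Nat.card_coe_set_eq, Set.ncard_coe_finset]
  set D : Finset (Fin m × Fin m) :=
    Finset.univ.filter (fun ij : Fin m × Fin m => M' ij.1 ij.2 ≠ M ij.1 ij.2) with hDdef
  have hDCard : (Nat.card {ij : Fin m × Fin m | M' ij.1 ij.2 ≠ M ij.1 ij.2} : ℝ) = D.card := by
    have : {ij : Fin m × Fin m | M' ij.1 ij.2 ≠ M ij.1 ij.2} = ↑D := by
      ext ij; simp [hDdef]
    rw [this, Nat.card_coe_set_eq, Set.ncard_coe_finset]
  rw [hGoodCard] at hM
  rw [hDCard] at hM'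
  -- key: there is an untouched good pair
  have key : ∃ p ∈ Good, ∀ i ∈ p.1, ∀ j ∈ p.2, M' i j = M i j := by
    by_contra hc
    push_neg at hc
    have hsub : Good ⊆ D.biUnion (fun ij =>
        Good.filter (fun p => ij.1 ∈ p.1 ∧ ij.2 ∈ p.2)) := by
      intro p hp
      obtain ⟨i, hi, j, hj, hne⟩ := hc p hp
      refine Finset.mem_biUnion.2 ⟨(i, j), ?_, ?_⟩
      · simp [hDdef, hne]
      · simp [hp, hi, hj]
    have hbound : ∀ ij : Fin m × Fin m,
        (Good.filter (fun p => ij.1 ∈ p.1 ∧ ij.2 ∈ p.2)).card ≤ m ^ (r - 1) * m ^ (r - 1) := by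
      intro ij
      have hinj : ∀ p ∈ Good.filter (fun p => ij.1 ∈ p.1 ∧ ij.2 ∈ p.2),
          (p.1.erase ij.1, p.2.erase ij.2) ∈
            (Finset.univ.powersetCard (r - 1)) ×ˢ (Finset.univ.powersetCard (r - 1)) := by
        intro p hp
        simp only [Finset.mem_filter, hGoodDef, hP] at hp
        obtain ⟨⟨_, h1, h2, _⟩, hi, hj⟩ := hp
        simp only [Finset.mem_product, Finset.mem_powersetCard]
        exact ⟨⟨Finset.subset_univ _, by rw [Finset.card_erase_of_mem hi, h1]⟩,
          ⟨Finset.subset_univ _, by rw [Finset.card_erase_of_mem hj, h2]⟩⟩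
      calc (Good.filter (fun p => ij.1 ∈ p.1 ∧ ij.2 ∈ p.2)).card
          ≤ ((Finset.univ.powersetCard (r - 1)) ×ˢ
              (Finset.univ.powersetCard (r - 1))).card := by
            apply Finset.card_le_card_of_injOn _ hinj
            intro p hp q hq he
            simp only [Finset.coe_filter, Set.mem_setOf_eq] at hp hq
            obtain ⟨hpG, hpi, hpj⟩ := hp
            obtain ⟨hqG, hqi, hqj⟩ := hq
            simp only [Prod.mk.injEq] at he
            have h1 : p.1 = q.1 := by
              rw [← Finset.insert_erase hpi, ← Finset.insert_erase hqi, he.1]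
            have h2 : p.2 = q.2 := by
              rw [← Finset.insert_erase hpj, ← Finset.insert_erase hqj, he.2]
            exact Prod.ext h1 h2
        _ ≤ m ^ (r - 1) * m ^ (r - 1) := by
            rw [Finset.card_product, Finset.card_powersetCard, Finset.card_univ,
              Fintype.card_fin]
            exact Nat.mul_le_mul (Nat.choose_le_pow _ _) (Nat.choose_le_pow _ _)
    have hcount : Good.card ≤ D.card * (m ^ (r - 1) * m ^ (r - 1)) := by
      calc Good.card ≤ (D.biUnion _).card := Finset.card_le_card hsub
        _ ≤ ∑ ij ∈ D, (Good.filter (fun p => ij.1 ∈ p.1 ∧ ij.2 ∈ p.2)).card :=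
            Finset.card_biUnion_le
        _ ≤ ∑ _ij ∈ D, m ^ (r - 1) * m ^ (r - 1) := Finset.sum_le_sum fun ij _ => hbound ij
        _ = D.card * (m ^ (r - 1) * m ^ (r - 1)) := by rw [Finset.sum_const, smul_eq_mul]
    -- convert to ℝ and contradict hM
    have hreal : (Good.card : ℝ) ≤ δ * (m : ℝ) ^ (2 * r) := by
      have h1 : (Good.card : ℝ) ≤ (D.card : ℝ) * (m : ℝ) ^ (2 * (r - 1)) := by
        have := Nat.cast_le (α := ℝ) |>.2 hcount
        push_cast at this
        rw [two_mul, pow_add]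
        exact this
      have h2 : (D.card : ℝ) * (m : ℝ) ^ (2 * (r - 1)) ≤
          δ * (m : ℝ) ^ 2 * (m : ℝ) ^ (2 * (r - 1)) :=
        mul_le_mul_of_nonneg_right hM' (by positivity)
      have h3 : δ * (m : ℝ) ^ 2 * (m : ℝ) ^ (2 * (r - 1)) = δ * (m : ℝ) ^ (2 * r) := by
        rw [mul_assoc, ← pow_add]
        congr 2
        omega
      linarith
    linarith
  obtain ⟨⟨S, T⟩, hpG, heq⟩ := key
  simp only [hGoodDef, hP, Finset.mem_filter] at hpG
  obtain ⟨-, hS, hT, hrank⟩ := hpG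
  have hsame : (M'.submatrix (Subtype.val : {i // i ∈ S} → Fin m)
      (Subtype.val : {j // j ∈ T} → Fin m)) =
      (M.submatrix (Subtype.val : {i // i ∈ S} → Fin m)
      (Subtype.val : {j // j ∈ T} → Fin m)) := by
    ext ⟨i, hi⟩ ⟨j, hj⟩
    exact heq i hi j hj
  calc r = (M.submatrix (Subtype.val : {i // i ∈ S} → Fin m)
      (Subtype.val : {j // j ∈ T} → Fin m)).rank := hrank.symm
    _ = (M'.submatrix _ _).rank := by rw [hsame]
    _ ≤ M'.rank := aux_rank_submatrix_le _ _ _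
end

section
/- Fix an integer r ≥ 1 and δ > 0. There exist constants c > 0 and K, depending only on r and δ, such that the following holds for all n. Suppose M ∈ ℝ^{r×n} is a δ-non-degenerate matrix with ‖M‖∞ ≤ 1. Then, for a uniformly random subset I ⊆ [n], with probability at least 1 − K·e^{−cn}, the matrix M_I is (δ/3)-non-degenerate. -/
lemma sum_choose_le (m k : ℕ) :
    (∑ j ∈ Finset.range k, (m.choose j : ℝ)) ≤ 2 ^ k * (3/2) ^ m := by
  have h1 : ∀ j ∈ Finset.range k, (m.choose j : ℝ) ≤ 2 ^ k * ((m.choose j : ℝ) * (1/2) ^ j) := by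
    intro j hj
    have hj' : j < k := Finset.mem_range.1 hj
    have h2 : (1:ℝ) ≤ 2 ^ k * (1/2) ^ j := by
      rw [one_div, inv_pow, ← div_eq_mul_inv, le_div_iff₀ (by positivity)]
      calc (1:ℝ) * 2 ^ j = 2 ^ j := one_mul _
        _ ≤ 2 ^ k := pow_le_pow_right₀ one_le_two hj'.le
    nlinarith [Nat.cast_nonneg (α := ℝ) (m.choose j)]
  have key : ∑ j ∈ Finset.range (max k (m+1)), (m.choose j : ℝ) * (1/2) ^ j = (3/2) ^ m := by
    have hsub : Finset.range (m+1) ⊆ Finset.range (max k (m+1)) :=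
      Finset.range_subset_range.2 (le_max_right _ _)
    rw [← Finset.sum_subset hsub (by
      intro j _ hj
      have hj2 : ¬ j < m + 1 := fun h => hj (Finset.mem_range.2 h)
      have : m < j := by omega
      simp [Nat.choose_eq_zero_of_lt this])]
    have h3 := add_pow (1/2 : ℝ) 1 m
    norm_num at h3
    rw [h3]
    apply Finset.sum_congr rfl
    intro j _; ring
  calc ∑ j ∈ Finset.range k, (m.choose j : ℝ)
      ≤ ∑ j ∈ Finset.range k, 2 ^ k * ((m.choose j : ℝ) * (1/2) ^ j) := Finset.sum_le_sum h1
    _ = 2 ^ k * ∑ j ∈ Finset.range k, (m.choose j : ℝ) * (1/2) ^ j := by rw [Finset.mul_sum]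
    _ ≤ 2 ^ k * ∑ j ∈ Finset.range (max k (m+1)), (m.choose j : ℝ) * (1/2) ^ j := by
        apply mul_le_mul_of_nonneg_left _ (by positivity)
        apply Finset.sum_le_sum_of_subset_of_nonneg (Finset.range_subset_range.2 (le_max_left _ _))
        intro j _ _; positivity
    _ = 2 ^ k * (3/2) ^ m := by rw [key]

lemma card_bad_le {n : ℕ} (S : Finset (Fin n)) (k : ℕ) :
    (((Finset.univ : Finset (Finset (Fin n))).filter
        (fun I => (I ∩ S).card < k)).card : ℝ)
      ≤ (2 ^ k * (3/2) ^ S.card) * 2 ^ (n - S.card) := by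
  classical
  set P := ((S.powerset.filter fun A => A.card < k) ×ˢ (Finset.univ \ S).powerset) with hP
  have hinj : ((Finset.univ : Finset (Finset (Fin n))).filter
      (fun I => (I ∩ S).card < k)).card ≤ P.card := by
    apply Finset.card_le_card_of_injOn (fun I => (I ∩ S, I \ S))
    · intro I hI
      simp only [Finset.mem_coe, Finset.mem_filter, Finset.mem_univ, true_and] at hI
      simp only [Finset.mem_coe, hP, Finset.mem_product, Finset.mem_filter, Finset.mem_powerset]
      refine ⟨⟨Finset.inter_subset_right, hI⟩, ?_⟩
      intro x hx
      simp only [Finset.mem_sdiff, Finset.mem_univ, true_and] at hx ⊢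
      exact hx.2
    · intro I₁ _ I₂ _ h
      have h1 : I₁ ∩ S = I₂ ∩ S := congrArg Prod.fst h
      have h2 : I₁ \ S = I₂ \ S := congrArg Prod.snd h
      have e1 : I₁ ∩ S ∪ I₁ \ S = I₁ := by
        ext x; simp only [Finset.mem_union, Finset.mem_inter, Finset.mem_sdiff]; tauto
      have e2 : I₂ ∩ S ∪ I₂ \ S = I₂ := by
        ext x; simp only [Finset.mem_union, Finset.mem_inter, Finset.mem_sdiff]; tauto
      rw [← e1, ← e2, h1, h2]
  have hPcard : P.card = (S.powerset.filter fun A => A.card < k).card * 2 ^ (n - S.card) := by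
    rw [hP, Finset.card_product, Finset.card_powerset, Finset.card_sdiff_of_subset (Finset.subset_univ S)]
    congr 2
    simp [Finset.card_univ]
  have hfil : ((S.powerset.filter fun A => A.card < k).card : ℝ)
      ≤ ∑ j ∈ Finset.range k, (S.card.choose j : ℝ) := by
    have hsub : (S.powerset.filter fun A => A.card < k)
        ⊆ (Finset.range k).biUnion (fun j => S.powersetCard j) := by
      intro A hA
      simp only [Finset.mem_filter, Finset.mem_powerset] at hA
      exact Finset.mem_biUnion.2 ⟨A.card, Finset.mem_range.2 hA.2,
        Finset.mem_powersetCard.2 ⟨hA.1, rfl⟩⟩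
    calc ((S.powerset.filter fun A => A.card < k).card : ℝ)
        ≤ (((Finset.range k).biUnion (fun j => S.powersetCard j)).card : ℝ) := by
          exact_mod_cast Finset.card_le_card hsub
      _ ≤ ∑ j ∈ Finset.range k, (S.card.choose j : ℝ) := by
          calc (((Finset.range k).biUnion (fun j => S.powersetCard j)).card : ℝ)
              ≤ ((∑ j ∈ Finset.range k, (S.powersetCard j).card : ℕ) : ℝ) := by
                exact_mod_cast Finset.card_biUnion_le
            _ = ∑ j ∈ Finset.range k, (S.card.choose j : ℝ) := by
                push_cast [Finset.card_powersetCard]; rfl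
  calc (((Finset.univ : Finset (Finset (Fin n))).filter
        (fun I => (I ∩ S).card < k)).card : ℝ)
      ≤ (P.card : ℝ) := by exact_mod_cast hinj
    _ = ((S.powerset.filter fun A => A.card < k).card : ℝ) * 2 ^ (n - S.card) := by
        rw [hPcard]; push_cast; ring
    _ ≤ (∑ j ∈ Finset.range k, (S.card.choose j : ℝ)) * 2 ^ (n - S.card) := by
        apply mul_le_mul_of_nonneg_right hfil (by positivity)
    _ ≤ (2 ^ k * (3/2) ^ S.card) * 2 ^ (n - S.card) := by
        apply mul_le_mul_of_nonneg_right (sum_choose_le _ _) (by positivity)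


lemma net_exists (r : ℕ) (ε : ℝ) (hε : 0 < ε) :
    ∃ T : Finset (Fin r → ℝ), (∀ t ∈ T, ∑ i, t i ^ 2 = 1) ∧
      ∀ e : Fin r → ℝ, ∑ i, e i ^ 2 = 1 → ∃ t ∈ T, dist e t < ε := by
  classical
  set Sph : Set (Fin r → ℝ) := {e | ∑ i, e i ^ 2 = 1} with hS
  have hclosed : IsClosed Sph := isClosed_eq (by fun_prop) continuous_const
  have hsub : Sph ⊆ Metric.closedBall 0 1 := by
    intro e he
    simp only [Metric.mem_closedBall, dist_zero_right]
    rw [pi_norm_le_iff_of_nonneg zero_le_one]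
    intro i
    have h1 : e i ^ 2 ≤ 1 := by
      rw [← he]; exact Finset.single_le_sum (f := fun i => e i ^ 2) (fun i _ => sq_nonneg _) (Finset.mem_univ i)
    rw [Real.norm_eq_abs]
    nlinarith [abs_nonneg (e i), sq_abs (e i)]
  have hcomp : IsCompact Sph := (isCompact_closedBall 0 1).of_isClosed_subset hclosed hsub
  have hcover : Sph ⊆ ⋃ t ∈ Sph, Metric.ball t ε := fun e he =>
    Set.mem_iUnion₂.2 ⟨e, he, Metric.mem_ball_self hε⟩
  obtain ⟨b', hb'sub, hb'fin, hb'cov⟩ := hcomp.elim_finite_subcover_image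
    (fun t _ => Metric.isOpen_ball) hcover
  refine ⟨hb'fin.toFinset, ?_, ?_⟩
  · intro t ht; exact hb'sub (hb'fin.mem_toFinset.1 ht)
  · intro e he
    obtain ⟨t, ht, hd⟩ := Set.mem_iUnion₂.1 (hb'cov he)
    exact ⟨t, hb'fin.mem_toFinset.2 ht, hd⟩

/-- An `r × n` real matrix `M'` is `δ`-non-degenerate if for every Euclidean unit vector
`e ∈ ℝ^r` there are at least `δn` columns `w` of `M'` with `|⟨w,e⟩| ≥ δ`. -/
def NonDeg {r n : ℕ} (δ : ℝ) (M' : Matrix (Fin r) (Fin n) ℝ) : Prop :=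
  ∀ e : Fin r → ℝ, ∑ i, e i ^ 2 = 1 →
    δ * n ≤ (Nat.card {j : Fin n | δ ≤ |∑ i, M' i j * e i|} : ℝ)

theorem statement8 (r : ℕ) (hr : 1 ≤ r) (δ : ℝ) (hδ : 0 < δ) :
    ∃ c K : ℝ, 0 < c ∧ ∀ (n : ℕ) (M : Matrix (Fin r) (Fin n) ℝ),
      NonDeg δ M → (∀ i j, |M i j| ≤ 1) →
      -- with probability at least `1 - K·exp(-cn)` over a uniformly random subset `I ⊆ [n]`,
      -- the column submatrix `M_I` is `(δ/3)`-non-degenerate (with at least `(δ/3)·n` columns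
      -- `w` of `M_I` satisfying `|⟨w,e⟩| ≥ δ/3`, where `n` is the original number of columns)
      1 - K * Real.exp (-c * n) ≤
        (Nat.card {I : Finset (Fin n) |
          ∀ e : Fin r → ℝ, ∑ i, e i ^ 2 = 1 →
            δ / 3 * n ≤
              (Nat.card {j : Fin n | j ∈ I ∧ δ / 3 ≤ |∑ i, M i j * e i|} : ℝ)} : ℝ) / 2 ^ n := by
  classical
  have hr' : (0:ℝ) < r := by exact_mod_cast hr
  set ε : ℝ := 2 * δ / (3 * r) with hε_def
  have hε : 0 < ε := by positivity
  obtain ⟨T, hTunit, hTnet⟩ := net_exists r ε hε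
  set c : ℝ := -(δ * (Real.log 2 / 3 + Real.log (3/4))) with hc_def
  have hlogneg : Real.log 2 / 3 + Real.log (3/4) < 0 := by
    have hlog : Real.log 2 + 3 * Real.log (3/4) = Real.log (27/32) := by
      rw [show (27/32:ℝ) = 2 * (3/4)^3 by norm_num,
        Real.log_mul (by norm_num) (by positivity), Real.log_pow]
      push_cast; ring
    have h27 : Real.log (27/32) < 0 := Real.log_neg (by norm_num) (by norm_num)
    linarith
  have hc : 0 < c := by
    rw [hc_def]; nlinarith
  refine ⟨c, 2 * T.card, hc, ?_⟩
  intro n M hM hM1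
  set k₀ : ℕ := ⌈δ * n / 3⌉₊ with hk₀_def
  set St : (Fin r → ℝ) → Finset (Fin n) :=
    fun t => Finset.univ.filter (fun j => δ ≤ |∑ i, M i j * t i|) with hSt_def
  set Bad : (Fin r → ℝ) → Finset (Finset (Fin n)) :=
    fun t => Finset.univ.filter (fun I => (I ∩ St t).card < k₀) with hBad_def
  set Good : Finset (Finset (Fin n)) := Finset.univ \ T.biUnion Bad with hGood_def
  -- (1) large St
  have hcard_St : ∀ t ∈ T, δ * n ≤ ((St t).card : ℝ) := by
    intro t ht
    have h := hM t (hTunit t ht)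
    have heq : {j : Fin n | δ ≤ |∑ i, M i j * t i|} = ↑(St t) := by
      ext j; simp [hSt_def]
    rwa [heq, Nat.card_coe_set_eq, Set.ncard_coe_finset] at h
  -- (2) good sets satisfy the property
  have hGoodP : ∀ I ∈ Good, ∀ e : Fin r → ℝ, ∑ i, e i ^ 2 = 1 →
      δ / 3 * n ≤ (Nat.card {j : Fin n | j ∈ I ∧ δ / 3 ≤ |∑ i, M i j * e i|} : ℝ) := by
    intro I hI e he
    obtain ⟨t, htT, hdist⟩ := hTnet e he
    have hIg : k₀ ≤ (I ∩ St t).card := by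
      by_contra hlt
      have hmem : I ∈ T.biUnion Bad :=
        Finset.mem_biUnion.2 ⟨t, htT, Finset.mem_filter.2 ⟨Finset.mem_univ _, by omega⟩⟩
      exact (Finset.mem_sdiff.1 hI).2 hmem
    have hcore : ∀ j ∈ I ∩ St t, δ / 3 ≤ |∑ i, M i j * e i| := by
      intro j hj
      have hδt : δ ≤ |∑ i, M i j * t i| := by
        have := (Finset.mem_inter.1 hj).2
        rw [hSt_def] at this
        exact (Finset.mem_filter.1 this).2
      have hsum : ∑ i, M i j * e i = (∑ i, M i j * t i) + ∑ i, M i j * (e i - t i) := by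
        rw [← Finset.sum_add_distrib]
        apply Finset.sum_congr rfl
        intro i _; ring
      have hpert : |∑ i, M i j * (e i - t i)| ≤ 2 * δ / 3 := by
        calc |∑ i, M i j * (e i - t i)| ≤ ∑ i, |M i j * (e i - t i)| :=
              Finset.abs_sum_le_sum_abs _ _
          _ ≤ ∑ _i : Fin r, ε := by
              apply Finset.sum_le_sum
              intro i _
              rw [abs_mul]
              have h2 : |e i - t i| ≤ ε := by
                have hd := dist_le_pi_dist e t i
                rw [Real.dist_eq] at hd
                linarith [hdist.le]
              calc |M i j| * |e i - t i| ≤ 1 * ε :=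
                    mul_le_mul (hM1 i j) h2 (abs_nonneg _) zero_le_one
                _ = ε := one_mul _
          _ = r * ε := by
              rw [Finset.sum_const, Finset.card_univ, Fintype.card_fin, nsmul_eq_mul]
          _ = 2 * δ / 3 := by
              rw [hε_def]
              field_simp
      have habs := abs_sub_abs_le_abs_sub (∑ i, M i j * t i) (-(∑ i, M i j * (e i - t i)))
      rw [abs_neg, sub_neg_eq_add, ← hsum] at habs
      linarith
    have hsubset : (↑(I ∩ St t) : Set (Fin n)) ⊆
        {j : Fin n | j ∈ I ∧ δ / 3 ≤ |∑ i, M i j * e i|} := by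
      intro j hj
      have hj' : j ∈ I ∩ St t := hj
      exact ⟨(Finset.mem_inter.1 hj').1, hcore j hj'⟩
    have hcardle : ((I ∩ St t).card : ℝ)
        ≤ (Nat.card {j : Fin n | j ∈ I ∧ δ / 3 ≤ |∑ i, M i j * e i|} : ℝ) := by
      rw [Nat.card_coe_set_eq]
      have := Set.ncard_le_ncard hsubset (Set.toFinite _)
      rw [Set.ncard_coe_finset] at this
      exact_mod_cast this
    have hk : δ / 3 * n ≤ (k₀ : ℝ) := by
      have := Nat.le_ceil (δ * n / 3)
      rw [← hk₀_def] at this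
      linarith
    have : (k₀ : ℝ) ≤ ((I ∩ St t).card : ℝ) := by exact_mod_cast hIg
    linarith
  -- (3) per-t bad bound
  have hBad_bound : ∀ t ∈ T, ((Bad t).card : ℝ) ≤ 2 * Real.exp (-c * n) * 2 ^ n := by
    intro t ht
    set m : ℕ := (St t).card with hm_def
    have hmn : m ≤ n := by
      have := Finset.card_le_univ (St t)
      simpa [Finset.card_univ] using this
    have hmδ : δ * n ≤ (m : ℝ) := hcard_St t ht
    have step1 : ((Bad t).card : ℝ) ≤ (2 ^ k₀ * (3/2) ^ m) * 2 ^ (n - m) :=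
      card_bad_le (St t) k₀
    have e1 : ((2:ℝ) ^ k₀ * (3/2) ^ m) * 2 ^ (n - m) = 2 ^ n * (2 ^ k₀ * (3/4) ^ m) := by
      have h : (2:ℝ) ^ n = 2 ^ m * 2 ^ (n - m) := by
        rw [← pow_add]; congr 1; omega
      have h34 : (3/4:ℝ) ^ m = (3/2) ^ m / 2 ^ m := by
        rw [show (3/4:ℝ) = (3/2) / 2 by norm_num, div_pow]
      rw [h, h34]
      have h2m : (2:ℝ) ^ m ≠ 0 := by positivity
      field_simp
    have step2 : (2:ℝ) ^ k₀ ≤ 2 * Real.exp (Real.log 2 * (δ * n / 3)) := by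
      have hk1 : (k₀ : ℝ) ≤ δ * n / 3 + 1 := by
        have := Nat.ceil_lt_add_one (show (0:ℝ) ≤ δ * n / 3 by positivity)
        rw [← hk₀_def] at this
        linarith
      have hexp : (2:ℝ) ^ k₀ = Real.exp ((k₀ : ℝ) * Real.log 2) := by
        rw [← Real.log_pow, Real.exp_log (by positivity)]
      rw [hexp]
      have : ((k₀:ℝ)) * Real.log 2 ≤ Real.log 2 * (δ * n / 3) + Real.log 2 := by
        have hl2 : 0 < Real.log 2 := Real.log_pos (by norm_num)
        nlinarith
      calc Real.exp ((k₀:ℝ) * Real.log 2)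
          ≤ Real.exp (Real.log 2 * (δ * n / 3) + Real.log 2) := Real.exp_le_exp.2 this
        _ = Real.exp (Real.log 2 * (δ * n / 3)) * 2 := by
            rw [Real.exp_add, Real.exp_log (by norm_num : (0:ℝ) < 2)]
        _ = 2 * Real.exp (Real.log 2 * (δ * n / 3)) := by ring
    have step3 : ((3/4:ℝ)) ^ m ≤ Real.exp (Real.log (3/4) * (δ * n)) := by
      have hexp : ((3/4:ℝ)) ^ m = Real.exp ((m : ℝ) * Real.log (3/4)) := by
        rw [← Real.log_pow, Real.exp_log (by positivity)]
      rw [hexp]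
      apply Real.exp_le_exp.2
      have hl34 : Real.log (3/4) < 0 := Real.log_neg (by norm_num) (by norm_num)
      nlinarith
    have hexps : Real.exp (Real.log 2 * (δ * n / 3)) * Real.exp (Real.log (3/4) * (δ * n))
        = Real.exp (-c * n) := by
      rw [← Real.exp_add]
      congr 1
      rw [hc_def]; ring
    calc ((Bad t).card : ℝ) ≤ (2 ^ k₀ * (3/2) ^ m) * 2 ^ (n - m) := step1
      _ = 2 ^ n * (2 ^ k₀ * (3/4) ^ m) := e1
      _ ≤ 2 ^ n * ((2 * Real.exp (Real.log 2 * (δ * n / 3))) *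
            Real.exp (Real.log (3/4) * (δ * n))) := by
          apply mul_le_mul_of_nonneg_left _ (by positivity)
          apply mul_le_mul step2 step3 (by positivity) (by positivity)
      _ = 2 * Real.exp (-c * n) * 2 ^ n := by
          rw [mul_assoc, hexps]; ring
  -- (4) assemble
  have hUnion : ((T.biUnion Bad).card : ℝ) ≤ (T.card : ℝ) * (2 * Real.exp (-c * n)) * 2 ^ n := by
    calc ((T.biUnion Bad).card : ℝ) ≤ ((∑ t ∈ T, (Bad t).card : ℕ) : ℝ) := by
          exact_mod_cast Finset.card_biUnion_le
      _ = ∑ t ∈ T, ((Bad t).card : ℝ) := by push_cast; rfl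
      _ ≤ ∑ _t ∈ T, 2 * Real.exp (-c * n) * 2 ^ n := Finset.sum_le_sum (fun t ht => hBad_bound t ht)
      _ = (T.card : ℝ) * (2 * Real.exp (-c * n) * 2 ^ n) := by
          rw [Finset.sum_const, nsmul_eq_mul]
      _ = (T.card : ℝ) * (2 * Real.exp (-c * n)) * 2 ^ n := by ring
  have hGoodCard : (2:ℝ) ^ n - (T.card : ℝ) * (2 * Real.exp (-c * n)) * 2 ^ n
      ≤ (Good.card : ℝ) := by
    have hle : (T.biUnion Bad).card ≤ 2 ^ n := by
      have := Finset.card_le_univ (T.biUnion Bad)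
      simpa [Finset.card_univ, Fintype.card_finset, Fintype.card_fin] using this
    have hcg : Good.card = 2 ^ n - (T.biUnion Bad).card := by
      rw [hGood_def, Finset.card_sdiff_of_subset (Finset.subset_univ _), Finset.card_univ,
        Fintype.card_finset, Fintype.card_fin]
    rw [hcg]
    rw [Nat.cast_sub hle]
    push_cast
    linarith
  have hTarget : ((Good.card : ℕ) : ℝ) ≤ (Nat.card {I : Finset (Fin n) |
      ∀ e : Fin r → ℝ, ∑ i, e i ^ 2 = 1 →
        δ / 3 * n ≤ (Nat.card {j : Fin n | j ∈ I ∧ δ / 3 ≤ |∑ i, M i j * e i|} : ℝ)} : ℝ) := by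
    rw [Nat.card_coe_set_eq]
    have hsub : (↑Good : Set (Finset (Fin n))) ⊆ {I : Finset (Fin n) |
        ∀ e : Fin r → ℝ, ∑ i, e i ^ 2 = 1 →
          δ / 3 * n ≤ (Nat.card {j : Fin n | j ∈ I ∧ δ / 3 ≤ |∑ i, M i j * e i|} : ℝ)} := by
      intro I hI
      exact hGoodP I hI
    have := Set.ncard_le_ncard hsub (Set.toFinite _)
    rw [Set.ncard_coe_finset] at this
    exact_mod_cast this
  rw [le_div_iff₀ (by positivity : (0:ℝ) < 2 ^ n)]
  have hexp_pos : 0 < Real.exp (-c * n) := Real.exp_pos _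
  calc (1 - 2 * (T.card : ℝ) * Real.exp (-c * n)) * 2 ^ n
      = 2 ^ n - (T.card : ℝ) * (2 * Real.exp (-c * n)) * 2 ^ n := by push_cast; ring
    _ ≤ (Good.card : ℝ) := hGoodCard
    _ ≤ _ := hTarget
end

section
/- For every integer r ≥ 1 and any ε > 0, there exists c = c(r,ε) > 0 such that the following holds. Let A be a complex r×r matrix with |det A| ≥ ε and with all entries of absolute value at most 1. Let θ ∈ [−π, π] be a uniformly random phase. Then with probability at least c, the real matrix Re(e^{iθ}A) (obtained by taking the real part of each entry of e^{iθ}A) satisfies |det Re(e^{iθ}A)| ≥ c. -/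
open Polynomial Complex MeasureTheory


lemma aux_natDegree {r : ℕ} (A B : Matrix (Fin r) (Fin r) ℂ) :
    (Matrix.of fun i j => C (A i j) * X + C (B i j)).det.natDegree ≤ r := by
  rw [Matrix.det_apply']
  refine natDegree_sum_le_of_forall_le _ _ fun σ _ => ?_
  refine (natDegree_mul_le).trans ?_
  rw [natDegree_intCast]
  rw [zero_add]
  refine (natDegree_prod_le _ _).trans ?_
  simp only [Matrix.of_apply]
  refine le_trans (Finset.sum_le_sum (fun i (_ : i ∈ Finset.univ) =>
    (natDegree_linear_le : (C (A (σ i) i) * X + C (B (σ i) i)).natDegree ≤ 1))) ?_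
  simp

lemma aux_coeff {r : ℕ} (A B : Matrix (Fin r) (Fin r) ℂ) :
    (Matrix.of fun i j => C (A i j) * X + C (B i j)).det.coeff r = A.det := by
  rw [Matrix.det_apply', finset_sum_coeff]
  rw [Matrix.det_apply']
  refine Finset.sum_congr rfl fun σ _ => ?_
  simp only [Matrix.of_apply]
  have h1 : ∀ p ∈ (Finset.univ : Finset (Fin r)),
      (C (A (σ p) p) * X + C (B (σ p) p)).natDegree ≤ 1 :=
    fun p _ => natDegree_linear_le
  have h2 := coeff_prod_of_natDegree_le Finset.univ
    (fun i => C (A (σ i) i) * X + C (B (σ i) i)) 1 h1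
  simp only [Finset.card_univ, Fintype.card_fin, mul_one] at h2
  have h3 : ((↑↑(Equiv.Perm.sign σ) : ℂ[X]) * ∏ i : Fin r,
      (C (A (σ i) i) * X + C (B (σ i) i))).coeff r
      = (↑↑(Equiv.Perm.sign σ) : ℂ) * ((∏ i : Fin r,
      (C (A (σ i) i) * X + C (B (σ i) i))).coeff r) := by
    rw [← C_eq_intCast, coeff_C_mul]
  rw [h3, h2]
  congr 1
  refine Finset.prod_congr rfl fun i _ => ?_
  simp [coeff_C]


lemma aux_eval {r : ℕ} (A : Matrix (Fin r) (Fin r) ℂ) (θ : ℝ) :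
    ((Matrix.of fun i j => C (A i j) * X + C ((starRingEnd ℂ) (A i j))).det).eval
        (Complex.exp (2 * θ * I))
      = (2 * Complex.exp ((θ : ℂ) * I)) ^ r *
        (((Matrix.of fun i j => (Complex.exp ((θ : ℂ) * I) * A i j).re).det : ℝ) : ℂ) := by
  set w : ℂ := Complex.exp (2 * θ * I) with hw
  have e1 : ((Matrix.of fun i j => C (A i j) * X + C ((starRingEnd ℂ) (A i j))).det).eval w
      = (Matrix.of fun i j => w * A i j + (starRingEnd ℂ) (A i j)).det := by
    rw [show ∀ q : ℂ[X], eval w q = (evalRingHom w) q from fun _ => rfl, RingHom.map_det]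
    congr 1
    ext i j
    simp only [RingHom.mapMatrix_apply, Matrix.map_apply, Matrix.of_apply, coe_evalRingHom, eval_add, eval_mul, eval_C, eval_X]
    ring
  have e2 : (((Matrix.of fun i j => (Complex.exp ((θ : ℂ) * I) * A i j).re).det : ℝ) : ℂ)
      = (Matrix.of fun i j => (((Complex.exp ((θ : ℂ) * I) * A i j).re : ℝ) : ℂ)).det := by
    rw [show ∀ x : ℝ, ((x : ℝ) : ℂ) = Complex.ofRealHom x from fun _ => rfl, RingHom.map_det]
    rfl
  have e3 := Matrix.det_smul
    (Matrix.of fun i j => (((Complex.exp ((θ : ℂ) * I) * A i j).re : ℝ) : ℂ))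
    (2 * Complex.exp ((θ : ℂ) * I))
  rw [Fintype.card_fin] at e3
  rw [e1, e2, ← e3]
  congr 1
  ext i j
  simp only [Matrix.smul_apply, Matrix.of_apply, smul_eq_mul]
  have h2 : (((Complex.exp ((θ : ℂ) * I) * A i j).re : ℝ) : ℂ)
      = (Complex.exp ((θ : ℂ) * I) * A i j
          + (starRingEnd ℂ) (Complex.exp ((θ : ℂ) * I) * A i j)) / 2 := by
    rw [Complex.add_conj]; push_cast; ring
  rw [h2, map_mul]
  have hc : (starRingEnd ℂ) (Complex.exp ((θ : ℂ) * I)) = Complex.exp (-(θ : ℂ) * I) := by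
    rw [← Complex.exp_conj]; simp
  have he : Complex.exp ((θ : ℂ) * I) * Complex.exp ((θ : ℂ) * I) = w := by
    rw [hw, ← Complex.exp_add]; ring_nf
  have he2 : Complex.exp ((θ : ℂ) * I) * Complex.exp (-(θ : ℂ) * I) = 1 := by
    rw [← Complex.exp_add]; simp
  rw [hc]
  linear_combination (-(A i j)) * he + (-((starRingEnd ℂ) (A i j))) * he2

lemma aux_int {r : ℕ} (A : Matrix (Fin r) (Fin r) ℂ) :
    (2 : ℂ) ^ r * ∫ θ in (-Real.pi)..Real.pi,
      (((Matrix.of fun i j => (Complex.exp ((θ : ℂ) * I) * A i j).re).det : ℝ) : ℂ)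
        * Complex.exp (-(r : ℂ) * θ * I)
    = 2 * Real.pi * A.det := by
  set p : ℂ[X] :=
    (Matrix.of fun i j => C (A i j) * X + C ((starRingEnd ℂ) (A i j))).det with hp
  have hdeg : p.natDegree < r + 1 := Nat.lt_succ_of_le (aux_natDegree A _)
  set F : ℝ → ℂ := fun θ =>
    (((Matrix.of fun i j => (Complex.exp ((θ : ℂ) * I) * A i j).re).det : ℝ) : ℂ) with hF
  have key : ∀ θ : ℝ, (2 : ℂ) ^ r * (F θ * Complex.exp (-(r : ℂ) * θ * I))
      = p.eval (Complex.exp (2 * θ * I)) * Complex.exp (-(2 * (r : ℂ)) * θ * I) := by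
    intro θ
    rw [aux_eval A θ, mul_pow, ← Complex.exp_nat_mul]
    have hE : Complex.exp ((r : ℂ) * ((θ : ℂ) * I)) * Complex.exp (-(2 * (r : ℂ)) * θ * I)
        = Complex.exp (-(r : ℂ) * θ * I) := by
      rw [← Complex.exp_add]; congr 1; ring
    rw [← hE]; ring
  have expand : ∀ θ : ℝ,
      p.eval (Complex.exp (2 * θ * I)) * Complex.exp (-(2 * (r : ℂ)) * θ * I)
      = ∑ k ∈ Finset.range (r + 1),
          p.coeff k * Complex.exp ((2 * (k : ℂ) - 2 * (r : ℂ)) * I * θ) := by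
    intro θ
    rw [eval_eq_sum_range' hdeg, Finset.sum_mul]
    refine Finset.sum_congr rfl fun k _ => ?_
    rw [mul_assoc]
    congr 1
    rw [← Complex.exp_nat_mul, ← Complex.exp_add]
    congr 1
    ring
  have hcont : ∀ k : ℕ,
      Continuous fun θ : ℝ => p.coeff k * Complex.exp ((2 * (k : ℂ) - 2 * (r : ℂ)) * I * θ) := by
    intro k
    exact continuous_const.mul (Complex.continuous_exp.comp (continuous_const.mul
      Complex.continuous_ofReal))
  have hJ : (∫ θ in (-Real.pi)..Real.pi,
      p.eval (Complex.exp (2 * θ * I)) * Complex.exp (-(2 * (r : ℂ)) * θ * I))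
      = 2 * Real.pi * A.det := by
    rw [intervalIntegral.integral_congr (g := fun θ => ∑ k ∈ Finset.range (r + 1),
          p.coeff k * Complex.exp ((2 * (k : ℂ) - 2 * (r : ℂ)) * I * θ))
        (fun θ _ => expand θ)]
    rw [intervalIntegral.integral_finset_sum
        (fun k _ => ((hcont k).intervalIntegrable _ _))]
    rw [Finset.sum_eq_single r ?side1 ?side2]
    · have hzero : (2 * (r : ℂ) - 2 * (r : ℂ)) = 0 := by ring
      simp only [hzero, zero_mul, Complex.exp_zero, mul_one]
      rw [intervalIntegral.integral_const]
      rw [show p.coeff r = A.det from aux_coeff A _]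
      rw [sub_neg_eq_add, real_smul]
      push_cast
      ring
    · intro k hk hkr
      have hne : ((2 : ℂ) * (k : ℂ) - 2 * (r : ℂ)) * I ≠ 0 := by
        apply mul_ne_zero _ Complex.I_ne_zero
        have : ((2 * (k : ℤ) - 2 * (r : ℤ) : ℤ) : ℂ) ≠ 0 :=
          Int.cast_ne_zero.mpr (by
            intro h
            apply hkr
            omega)
        convert this using 1
        push_cast
        ring
      have harg : ∀ θ : ℝ, (2 * (k : ℂ) - 2 * (r : ℂ)) * I * θ
          = ((2 * (k : ℂ) - 2 * (r : ℂ)) * I) * (θ : ℂ) := fun θ => rfl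
      rw [intervalIntegral.integral_const_mul]
      rw [integral_exp_mul_complex hne]
      have h1 : Complex.exp (((2 * (k : ℂ) - 2 * (r : ℂ)) * I) * (Real.pi : ℂ)) = 1 := by
        have := Complex.exp_int_mul_two_pi_mul_I ((k : ℤ) - (r : ℤ))
        convert this using 2
        push_cast
        ring
      have h2 : Complex.exp (((2 * (k : ℂ) - 2 * (r : ℂ)) * I) * ((-Real.pi : ℝ) : ℂ)) = 1 := by
        have := Complex.exp_int_mul_two_pi_mul_I ((r : ℤ) - (k : ℤ))
        convert this using 2
        push_cast
        ring
      rw [h1, h2]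
      simp
    · intro h
      exact absurd (Finset.self_mem_range_succ r) h
  calc (2 : ℂ) ^ r * ∫ θ in (-Real.pi)..Real.pi, F θ * Complex.exp (-(r : ℂ) * θ * I)
      = ∫ θ in (-Real.pi)..Real.pi, (2 : ℂ) ^ r * (F θ * Complex.exp (-(r : ℂ) * θ * I)) := by
        rw [intervalIntegral.integral_const_mul]
    _ = ∫ θ in (-Real.pi)..Real.pi,
          p.eval (Complex.exp (2 * θ * I)) * Complex.exp (-(2 * (r : ℂ)) * θ * I) :=
        intervalIntegral.integral_congr fun θ _ => key θ
    _ = 2 * Real.pi * A.det := hJ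

theorem statement9 (r : ℕ) (hr : 1 ≤ r) (ε : ℝ) (hε : 0 < ε) :
    ∃ c : ℝ, 0 < c ∧ ∀ A : Matrix (Fin r) (Fin r) ℂ,
      ε ≤ ‖A.det‖ → (∀ i j, ‖A i j‖ ≤ 1) →
      -- with probability at least `c` over a uniformly random phase `θ ∈ [-π, π]`,
      -- we have `|det Re(e^{iθ}A)| ≥ c`
      c ≤ (MeasureTheory.volume {θ : ℝ | θ ∈ Set.Icc (-Real.pi) Real.pi ∧
            c ≤ |(Matrix.of fun i j => (Complex.exp ((θ : ℂ) * Complex.I) * A i j).re).det|}).toReal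
          / (2 * Real.pi) := by
  set M : ℝ := (r.factorial : ℝ) with hM
  have hM1 : 1 ≤ M := Nat.one_le_cast.mpr r.factorial_pos
  have h2r : (0 : ℝ) < 2 ^ r := by positivity
  set c : ℝ := ε / (2 ^ r * (M + 1)) with hc
  have hc0 : 0 < c := by positivity
  refine ⟨c, hc0, fun A hdet hbound => ?_⟩
  have hπ : 0 < Real.pi := Real.pi_pos
  set f : ℝ → ℝ := fun θ =>
    (Matrix.of fun i j => (Complex.exp ((θ : ℂ) * Complex.I) * A i j).re).det with hf
  -- continuity
  have hfcont : Continuous f := by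
    apply Continuous.matrix_det
    apply continuous_matrix
    intro i j
    simp only [Matrix.of_apply]
    fun_prop
  -- pointwise bound |f θ| ≤ M
  have hfb : ∀ θ : ℝ, |f θ| ≤ M := by
    intro θ
    have := Matrix.det_le (A := Matrix.of fun i j =>
        (Complex.exp ((θ : ℂ) * Complex.I) * A i j).re)
      (abv := AbsoluteValue.abs) (x := 1) ?_
    · simpa only [Fintype.card_fin, one_pow, smul_eq_mul, mul_one, AbsoluteValue.abs_apply,
        nsmul_eq_mul] using this
    · intro i j
      simp only [Matrix.of_apply, AbsoluteValue.abs_apply]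
      calc |(Complex.exp ((θ : ℂ) * Complex.I) * A i j).re|
          ≤ ‖Complex.exp ((θ : ℂ) * Complex.I) * A i j‖ := Complex.abs_re_le_norm _
        _ = ‖A i j‖ := by
            rw [norm_mul, Complex.norm_exp_ofReal_mul_I, one_mul]
        _ ≤ 1 := hbound i j
  -- lower bound for the L¹ norm
  have hInt : 2 * Real.pi * ε ≤ 2 ^ r * ∫ θ in (-Real.pi)..Real.pi, |f θ| := by
    have haux := aux_int A
    have hni : ‖(2 : ℂ) ^ r * ∫ θ in (-Real.pi)..Real.pi,
        (((Matrix.of fun i j => (Complex.exp ((θ : ℂ) * I) * A i j).re).det : ℝ) : ℂ)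
          * Complex.exp (-(r : ℂ) * θ * I)‖ = 2 * Real.pi * ‖A.det‖ := by
      rw [haux, norm_mul, norm_mul, Complex.norm_real, Real.norm_eq_abs, abs_of_pos hπ]
      norm_num
    have hptnorm : ∀ θ : ℝ,
        ‖(((Matrix.of fun i j => (Complex.exp ((θ : ℂ) * I) * A i j).re).det : ℝ) : ℂ)
          * Complex.exp (-(r : ℂ) * θ * I)‖ = |f θ| := by
      intro θ
      rw [norm_mul, Complex.norm_real, Real.norm_eq_abs]
      have : (-(r : ℂ) * θ * I) = (((-(r * θ) : ℝ)) : ℂ) * I := by push_cast; ring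
      rw [this, Complex.norm_exp_ofReal_mul_I, mul_one]
    have hle := intervalIntegral.norm_integral_le_integral_norm
      (f := fun θ : ℝ =>
        (((Matrix.of fun i j => (Complex.exp ((θ : ℂ) * I) * A i j).re).det : ℝ) : ℂ)
          * Complex.exp (-(r : ℂ) * θ * I))
      (μ := volume) (by linarith : -Real.pi ≤ Real.pi)
    rw [intervalIntegral.integral_congr (g := fun θ => |f θ|) (fun θ _ => hptnorm θ)] at hle
    have h2 : 2 * Real.pi * ε ≤ 2 * Real.pi * ‖A.det‖ := by
      have := hdet; nlinarith
    rw [← hni] at h2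
    have hn2 : ‖(2:ℂ)^r‖ = (2:ℝ)^r := by
      rw [norm_pow]; norm_num
    rw [norm_mul, hn2] at h2
    calc 2 * Real.pi * ε ≤ 2 ^ r * ‖∫ θ in (-Real.pi)..Real.pi,
        (((Matrix.of fun i j => (Complex.exp ((θ : ℂ) * I) * A i j).re).det : ℝ) : ℂ)
          * Complex.exp (-(r : ℂ) * θ * I)‖ := h2
      _ ≤ 2 ^ r * ∫ θ in (-Real.pi)..Real.pi, |f θ| := by
          apply mul_le_mul_of_nonneg_left hle (le_of_lt h2r)
  -- measure part
  set E : Set ℝ := {θ : ℝ | θ ∈ Set.Icc (-Real.pi) Real.pi ∧ c ≤ |f θ|} with hE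
  have hEeq : E = Set.Icc (-Real.pi) Real.pi ∩ {θ : ℝ | c ≤ |f θ|} := by
    ext θ; simp [hE, Set.mem_inter_iff]
  have hEmeas : MeasurableSet E := by
    rw [hEeq]
    exact measurableSet_Icc.inter
      ((isClosed_le continuous_const hfcont.abs).measurableSet)
  have hEsub : E ⊆ Set.Icc (-Real.pi) Real.pi := fun θ hθ => hθ.1
  have hIccvol : volume (Set.Icc (-Real.pi) Real.pi) = ENNReal.ofReal (2 * Real.pi) := by
    rw [Real.volume_Icc]; congr 1; ring
  have hEfin : volume E < ⊤ :=
    lt_of_le_of_lt (measure_mono hEsub) (by rw [hIccvol]; exact ENNReal.ofReal_lt_top)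
  have hDfin : volume (Set.Icc (-Real.pi) Real.pi \ E) < ⊤ :=
    lt_of_le_of_lt (measure_mono Set.diff_subset) (by rw [hIccvol]; exact ENNReal.ofReal_lt_top)
  have hIntOn : IntegrableOn (fun θ => |f θ|) (Set.Icc (-Real.pi) Real.pi) volume :=
    hfcont.abs.integrableOn_Icc
  have hsplit : ∫ θ in Set.Icc (-Real.pi) Real.pi, |f θ|
      = (∫ θ in E, |f θ|) + ∫ θ in Set.Icc (-Real.pi) Real.pi \ E, |f θ| := by
    rw [← MeasureTheory.setIntegral_union Set.disjoint_sdiff_right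
      (measurableSet_Icc.diff hEmeas) (hIntOn.mono_set hEsub)
      (hIntOn.mono_set Set.diff_subset), Set.union_diff_cancel hEsub]
  have hintEq : (∫ θ in (-Real.pi)..Real.pi, |f θ|)
      = ∫ θ in Set.Icc (-Real.pi) Real.pi, |f θ| := by
    rw [intervalIntegral.integral_of_le (by linarith), ← integral_Icc_eq_integral_Ioc]
  have hb1 : (∫ θ in E, |f θ|) ≤ M * (volume E).toReal := by
    calc (∫ θ in E, |f θ|) ≤ ‖∫ θ in E, |f θ|‖ := le_abs_self _
      _ ≤ M * (volume E).toReal := by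
          apply MeasureTheory.norm_setIntegral_le_of_norm_le_const hEfin
          · intro x _
            rw [Real.norm_eq_abs, _root_.abs_abs]
            exact hfb x
  have hb2 : (∫ θ in Set.Icc (-Real.pi) Real.pi \ E, |f θ|) ≤ c * (2 * Real.pi) := by
    calc (∫ θ in Set.Icc (-Real.pi) Real.pi \ E, |f θ|)
        ≤ ‖∫ θ in Set.Icc (-Real.pi) Real.pi \ E, |f θ|‖ := le_abs_self _
      _ ≤ c * (volume (Set.Icc (-Real.pi) Real.pi \ E)).toReal := by
          apply MeasureTheory.norm_setIntegral_le_of_norm_le_const hDfin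
          · intro x hx
            rw [Real.norm_eq_abs, _root_.abs_abs]
            have hxE : x ∉ E := hx.2
            by_contra hcon
            exact hxE ⟨hx.1, le_of_not_ge hcon⟩
      _ ≤ c * (2 * Real.pi) := by
          apply mul_le_mul_of_nonneg_left _ hc0.le
          calc (volume (Set.Icc (-Real.pi) Real.pi \ E)).toReal
              ≤ (volume (Set.Icc (-Real.pi) Real.pi)).toReal :=
                ENNReal.toReal_mono (by rw [hIccvol]; exact ENNReal.ofReal_ne_top)
                  (measure_mono Set.diff_subset)
            _ = 2 * Real.pi := by rw [hIccvol, ENNReal.toReal_ofReal (by positivity)]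
  -- conclude
  have hMpos : 0 < M := lt_of_lt_of_le one_pos hM1
  have hε' : c * (2 ^ r * (M + 1)) = ε := by
    rw [hc]; field_simp
  set t : ℝ := (volume E).toReal with htdef
  have ht : 0 ≤ t := ENNReal.toReal_nonneg
  have hchain : 2 * Real.pi * ε ≤ 2 ^ r * (M * t + c * (2 * Real.pi)) := by
    refine hInt.trans ?_
    rw [hintEq, hsplit]
    exact mul_le_mul_of_nonneg_left (add_le_add hb1 hb2) h2r.le
  rw [← hε'] at hchain
  have hgoal : c ≤ t / (2 * Real.pi) := by
    rw [le_div_iff₀ (by positivity : (0:ℝ) < 2 * Real.pi)]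
    have h3 : (c * (2 * Real.pi)) * (2 ^ r * M) ≤ t * (2 ^ r * M) := by nlinarith [hchain]
    exact le_of_mul_le_mul_right h3 (by positivity)
  exact hgoal
end

section
/- Let q ≥ 1 be an integer and let B be a nonsingular complex q×q matrix all of whose entries have absolute value at most 1. Then for any vector e ∈ ℂ^q with Euclidean norm ‖e‖₂ = 1, the vector Be satisfies ‖Be‖₁ ≥ (q!)^{−1}·|det B|. -/
theorem statement10 (q : ℕ) (hq : 1 ≤ q) (B : Matrix (Fin q) (Fin q) ℂ)
    (hB : B.det ≠ 0) (hB1 : ∀ i j, ‖B i j‖ ≤ 1)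
    (e : Fin q → ℂ) (he : ∑ i, ‖e i‖ ^ 2 = 1) :
    ((q.factorial : ℝ))⁻¹ * ‖B.det‖ ≤ ∑ i, ‖B.mulVec e i‖ := by
  obtain ⟨n, rfl⟩ : ∃ n, q = n + 1 := ⟨q - 1, (Nat.succ_pred_eq_of_pos hq).symm⟩
  set S := ∑ i, ‖B.mulVec e i‖ with hS
  have hSnonneg : 0 ≤ S := Finset.sum_nonneg fun i _ => norm_nonneg _
  -- adjugate entries bounded by n!
  have hadj : ∀ i j, ‖B.adjugate i j‖ ≤ (n.factorial : ℝ) := by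
    intro i j
    rw [Matrix.adjugate_fin_succ_eq_det_submatrix, norm_mul, norm_pow, norm_neg, norm_one,
      one_pow, one_mul]
    have := Matrix.det_le (A := B.submatrix j.succAbove i.succAbove)
      (abv := NormedField.toAbsoluteValue ℂ) (x := 1) (fun a b => by
        exact hB1 (j.succAbove a) (i.succAbove b))
    simpa using (show ‖(B.submatrix j.succAbove i.succAbove).det‖ ≤ _ from this)
  -- Cramer identity
  have hcram : B.det • e = (B.adjugate).mulVec (B.mulVec e) := by
    rw [Matrix.mulVec_mulVec, Matrix.adjugate_mul, Matrix.smul_mulVec,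
      Matrix.one_mulVec]
  have key : ∀ j, ‖B.det‖ * ‖e j‖ ≤ (n.factorial : ℝ) * S := by
    intro j
    have h1 : B.det * e j = ∑ i, B.adjugate j i * B.mulVec e i := by
      have := congrFun hcram j
      simpa [Matrix.mulVec, dotProduct] using this
    calc ‖B.det‖ * ‖e j‖ = ‖B.det * e j‖ := (norm_mul _ _).symm
      _ = ‖∑ i, B.adjugate j i * B.mulVec e i‖ := by rw [h1]
      _ ≤ ∑ i, ‖B.adjugate j i * B.mulVec e i‖ := norm_sum_le _ _
      _ ≤ ∑ i, (n.factorial : ℝ) * ‖B.mulVec e i‖ := by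
          refine Finset.sum_le_sum fun i _ => ?_
          rw [norm_mul]
          exact mul_le_mul_of_nonneg_right (hadj j i) (norm_nonneg _)
      _ = (n.factorial : ℝ) * S := by rw [← Finset.mul_sum]
  -- choose max coordinate
  obtain ⟨j, -, hj⟩ := Finset.exists_max_image Finset.univ (fun j => ‖e j‖)
    ⟨0, Finset.mem_univ 0⟩
  have hsum_le : (1 : ℝ) ≤ (n + 1 : ℕ) * ‖e j‖ ^ 2 := by
    calc (1 : ℝ) = ∑ i, ‖e i‖ ^ 2 := he.symm
      _ ≤ ∑ _i : Fin (n + 1), ‖e j‖ ^ 2 :=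
          Finset.sum_le_sum fun i _ => pow_le_pow_left₀ (norm_nonneg _) (hj i (Finset.mem_univ i)) 2
      _ = (n + 1 : ℕ) * ‖e j‖ ^ 2 := by simp [Finset.sum_const, mul_comm]
  have hej1 : ‖e j‖ ≤ 1 := by
    nlinarith [he ▸ Finset.single_le_sum (f := fun i => ‖e i‖ ^ 2)
      (fun i _ => sq_nonneg ‖e i‖) (Finset.mem_univ j), norm_nonneg (e j)]
  have hej : (1 : ℝ) ≤ (n + 1 : ℕ) * ‖e j‖ := by
    have hsq : ‖e j‖ ^ 2 ≤ ‖e j‖ := by nlinarith [norm_nonneg (e j)]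
    calc (1 : ℝ) ≤ (n + 1 : ℕ) * ‖e j‖ ^ 2 := hsum_le
      _ ≤ (n + 1 : ℕ) * ‖e j‖ := mul_le_mul_of_nonneg_left hsq (by positivity)
  -- conclude
  have hfact : ((n + 1).factorial : ℝ) = (n + 1 : ℕ) * (n.factorial : ℝ) := by
    rw [Nat.factorial_succ]; push_cast; ring
  have hdetnn : (0:ℝ) ≤ ‖B.det‖ := norm_nonneg _
  have h2 : ‖B.det‖ ≤ ((n + 1).factorial : ℝ) * S := by
    calc ‖B.det‖ = ‖B.det‖ * 1 := (mul_one _).symm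
      _ ≤ ‖B.det‖ * ((n + 1 : ℕ) * ‖e j‖) := by
          exact mul_le_mul_of_nonneg_left hej hdetnn
      _ = (n + 1 : ℕ) * (‖B.det‖ * ‖e j‖) := by ring
      _ ≤ (n + 1 : ℕ) * ((n.factorial : ℝ) * S) := by
          refine mul_le_mul_of_nonneg_left (key j) (by positivity)
      _ = ((n + 1).factorial : ℝ) * S := by rw [hfact]; ring
  rw [inv_mul_le_iff₀ (by positivity)]
  exact h2
end

section
/- For any integer r ≥ 1 and any 0 < ε ≤ 1, there is a constant c = c(r,ε) > 0 such that the following holds. Suppose v₁,…,v_r ∈ ℝⁿ are ε-independent vectors with ‖v_i‖∞ ≤ 1 for each i. Then the r×n matrix with rows v₁,…,v_r is c-non-degenerate. -/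
/-- Vectors `v₁,…,v_q ∈ 𝔽ⁿ` are `ε`-independent if there do not exist linearly dependent
vectors `v₁',…,v_q'` with `‖v₁−v₁'‖₁ + … + ‖v_q−v_q'‖₁ ≤ εn`. -/
def EpsIndependent (𝔽 : Type*) [NormedField 𝔽] {q n : ℕ} (ε : ℝ)
    (v : Fin q → Fin n → 𝔽) : Prop :=
  ¬ ∃ v' : Fin q → Fin n → 𝔽, ¬ LinearIndependent 𝔽 v' ∧
      ∑ i, ∑ j, ‖v i j - v' i j‖ ≤ ε * n

theorem statement11 (r : ℕ) (hr : 1 ≤ r) (ε : ℝ) (hε : 0 < ε) (hε1 : ε ≤ 1) :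
    ∃ c : ℝ, 0 < c ∧ ∀ (n : ℕ) (v : Fin r → Fin n → ℝ),
      EpsIndependent ℝ ε v → (∀ i j, |v i j| ≤ 1) →
      NonDeg c (Matrix.of v) := by
  classical
  have hr0 : (0:ℝ) < r := by exact_mod_cast hr
  set c : ℝ := ε / (r * (r + 1)) with hc
  have hc0 : 0 < c := by positivity
  refine ⟨c, hc0, ?_⟩
  intro n v hind hbd e he
  by_contra hcon
  push_neg at hcon
  set t : Fin n → ℝ := fun j => ∑ k, v k j * e k with ht
  -- the bad set
  have hset : {j : Fin n | c ≤ |∑ i, Matrix.of v i j * e i|} = {j : Fin n | c ≤ |t j|} := by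
    rfl
  rw [hset] at hcon
  set T : Finset (Fin n) := Finset.univ.filter (fun j => c ≤ |t j|) with hT
  have hcard : (Nat.card {j : Fin n | c ≤ |t j|} : ℝ) = (T.card : ℝ) := by
    rw [Nat.card_eq_fintype_card]
    norm_cast
    exact Fintype.card_subtype _
  rw [hcard] at hcon
  -- bounds
  have heb : ∀ i, |e i| ≤ 1 := by
    intro i
    have h1 : e i ^ 2 ≤ 1 := by
      rw [← he]
      exact Finset.single_le_sum (fun k _ => sq_nonneg (e k)) (Finset.mem_univ i)
    nlinarith [abs_nonneg (e i), sq_abs (e i)]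
  have htb : ∀ j, |t j| ≤ r := by
    intro j
    calc |t j| ≤ ∑ k, |v k j * e k| := Finset.abs_sum_le_sum_abs _ _
      _ ≤ ∑ k : Fin r, 1 := Finset.sum_le_sum (fun k _ => by
            rw [abs_mul]
            calc |v k j| * |e k| ≤ 1 * 1 :=
                mul_le_mul (hbd k j) (heb k) (abs_nonneg _) zero_le_one
              _ = 1 := one_mul 1)
      _ = r := by simp
  -- sum of |t j|
  have hsumt : ∑ j, |t j| ≤ r * T.card + c * n := by
    rw [← Finset.sum_filter_add_sum_filter_not Finset.univ (fun j => c ≤ |t j|)]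
    have h1 : ∑ j ∈ T, |t j| ≤ r * T.card := by
      calc ∑ j ∈ T, |t j| ≤ ∑ _j ∈ T, (r:ℝ) := Finset.sum_le_sum (fun j _ => htb j)
        _ = r * T.card := by rw [Finset.sum_const, nsmul_eq_mul, mul_comm]
    have h2 : ∑ j ∈ Finset.univ.filter (fun j => ¬ c ≤ |t j|), |t j| ≤ c * n := by
      calc ∑ j ∈ Finset.univ.filter (fun j => ¬ c ≤ |t j|), |t j|
          ≤ ∑ _j ∈ Finset.univ.filter (fun j => ¬ c ≤ |t j|), c :=
            Finset.sum_le_sum (fun j hj => by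
              have := (Finset.mem_filter.mp hj).2
              linarith [lt_of_not_ge this])
        _ = c * (Finset.univ.filter (fun j => ¬ c ≤ |t j|)).card := by
            rw [Finset.sum_const, nsmul_eq_mul, mul_comm]
        _ ≤ c * n := by
            apply mul_le_mul_of_nonneg_left _ hc0.le
            exact_mod_cast Finset.card_le_card (Finset.subset_univ _) |>.trans
              (le_of_eq (Finset.card_univ.trans (Fintype.card_fin n)))
    exact add_le_add h1 h2
  -- contradiction: build v'
  apply hind
  refine ⟨fun i j => v i j - e i * t j, ?_, ?_⟩
  · rw [Fintype.linearIndependent_iff]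
    push_neg
    refine ⟨e, ?_, ?_⟩
    · funext j
      simp only [Finset.sum_apply, Pi.smul_apply, smul_eq_mul, Pi.zero_apply]
      have : ∑ i, e i * (v i j - e i * t j)
          = (∑ i, e i * v i j) - (∑ i, e i ^ 2) * t j := by
        simp only [mul_sub]
        rw [Finset.sum_sub_distrib]
        congr 1
        rw [Finset.sum_mul]
        exact Finset.sum_congr rfl fun i _ => by ring
      rw [this, he, one_mul]
      have : ∑ i, e i * v i j = t j := by
        rw [ht]
        exact Finset.sum_congr rfl (fun k _ => mul_comm _ _)
      rw [this, sub_self]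
    · by_contra hall
      push_neg at hall
      have : ∑ i, e i ^ 2 = 0 := Finset.sum_eq_zero (fun i _ => by rw [hall i]; ring)
      rw [he] at this
      norm_num at this
  · have hcost : ∑ i, ∑ j, ‖v i j - (v i j - e i * t j)‖
        = (∑ i, |e i|) * (∑ j, |t j|) := by
      simp only [sub_sub_cancel, Real.norm_eq_abs, abs_mul]
      rw [Finset.sum_mul]
      exact Finset.sum_congr rfl fun i _ => by rw [Finset.mul_sum]
    rw [hcost]
    have hesum : ∑ i, |e i| ≤ r := by
      calc ∑ i, |e i| ≤ ∑ _i : Fin r, (1:ℝ) := Finset.sum_le_sum (fun i _ => heb i)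
        _ = r := by simp
    have ht2 : ∑ j, |t j| ≤ r * (c * n) + c * n := by
      refine hsumt.trans ?_
      have : (T.card : ℝ) ≤ c * n := hcon.le
      nlinarith
    have htnn : 0 ≤ ∑ j, |t j| := Finset.sum_nonneg (fun j _ => abs_nonneg _)
    have hesnn : 0 ≤ ∑ i, |e i| := Finset.sum_nonneg (fun i _ => abs_nonneg _)
    calc (∑ i, |e i|) * (∑ j, |t j|) ≤ r * (r * (c * n) + c * n) := by
          exact mul_le_mul hesum ht2 htnn (le_of_lt hr0)
      _ = (r * (r + 1)) * c * n := by ring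
      _ = ε * n := by
          rw [hc]
          field_simp
end

section
/- Let 𝔽 be one of ℂ, ℝ, ℚ and fix an integer r ≥ 1. There is a constant K depending only on r such that the following holds. Let 0 < α ≤ 1 and let A ∈ 𝔽^{n×n} be a symmetric matrix with ‖A‖∞ ≤ 1. Suppose there is a matrix A' ∈ 𝔽^{n×n} of rank less than r with ‖A − A'‖₁ ≤ αn². Then there exists a symmetric matrix H ∈ 𝔽^{n×n} of rank less than r such that ‖A − H‖₁ ≤ K·α^{1/(2·(6r)^r)}·n². -/
open Finset Module Submodule
set_option synthInstance.maxHeartbeats 1000000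
set_option maxHeartbeats 1000000

variable {𝔽 : Type} [NormedField 𝔽]

lemma exists_good_coords {n : ℕ} (u : Fin n → (Fin n → 𝔽)) :
    ∃ (d : ℕ) (τ : Fin d → Fin n)
      (c : Fin n → Fin d → 𝔽),
      d ≤ finrank 𝔽 (span 𝔽 (Set.range u)) ∧
      (∀ j l, ‖c j l‖ ≤ 1) ∧
      (∀ j, u j = ∑ l, c j l • u (τ l)) ∧
      (∀ l, u (τ l) ≠ 0) := by
  classical
  set V := span 𝔽 (Set.range u) with hV
  set d := finrank 𝔽 V with hd
  let b : Basis (Fin d) 𝔽 V := finBasis 𝔽 V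
  let ub : Fin n → V := fun j => ⟨u j, subset_span (Set.mem_range_self j)⟩
  let coord : Fin n → Fin d → 𝔽 := fun j k => b.repr (ub j) k
  let N : (Fin d → Fin n) → Matrix (Fin d) (Fin d) 𝔽 :=
    fun τ => Matrix.of fun k l => coord (τ l) k
  -- from coordinate identities to vector identities
  have hvec : ∀ (τ : Fin d → Fin n) (j : Fin n) (cj : Fin d → 𝔽),
      (∀ k, coord j k = ∑ l, cj l * coord (τ l) k) → u j = ∑ l, cj l • u (τ l) := by
    intro τ j cj h
    have hb : ub j = ∑ l, cj l • ub (τ l) := by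
      apply b.ext_elem
      intro k
      have hs : b.repr (∑ l, cj l • ub (τ l)) k = ∑ l, cj l * b.repr (ub (τ l)) k := by
        rw [map_sum, Finsupp.finset_sum_apply]
        simp
      rw [hs]
      exact h k
    have := congrArg (Subtype.val) hb
    simpa using this
  -- existence of a tuple with nonzero determinant
  have hex : ∃ τ₀ : Fin d → Fin n, (N τ₀).det ≠ 0 := by
    rcases Nat.eq_zero_or_pos d with h0 | hpos
    · haveI : IsEmpty (Fin d) := ⟨fun l => by have := l.2; omega⟩
      exact ⟨fun l => (IsEmpty.elim ‹_› l), by rw [Matrix.det_isEmpty]; exact one_ne_zero⟩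
    · obtain ⟨s, hs_sub, hspan, hind⟩ := exists_linearIndependent 𝔽 (Set.range u)
      have hsfin : s.Finite := hind.setFinite
      haveI := hsfin.fintype
      have hcard : Fintype.card s = d := by
        rw [← Set.toFinset_card, ← finrank_span_set_eq_card hind, hspan, hd]
      let e : Fin d ≃ s := (Fintype.equivFinOfCardEq hcard).symm
      have hmem : ∀ l : Fin d, ((e l : Fin n → 𝔽)) ∈ Set.range u := fun l => hs_sub (e l).2
      let τ₀ : Fin d → Fin n := fun l => (hmem l).choose
      have hτ₀ : ∀ l, u (τ₀ l) = (e l : Fin n → 𝔽) := fun l => (hmem l).choose_spec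
      have hi2 : LinearIndependent 𝔽 (fun l => u (τ₀ l)) := by
        have := hind.comp e e.injective
        have heq : (fun l => u (τ₀ l)) = Subtype.val ∘ e := funext fun l => hτ₀ l
        rw [heq]; exact this
      have hi3 : LinearIndependent 𝔽 (fun l => ub (τ₀ l)) := by
        apply LinearIndependent.of_comp V.subtype
        exact hi2
      have hi4 := hi3.map' b.repr.toLinearMap (LinearEquiv.ker _)
      have hi5 := hi4.map' (Finsupp.linearEquivFunOnFinite 𝔽 𝔽 (Fin d)).toLinearMap
        (LinearEquiv.ker _)
      have hi6 : LinearIndependent 𝔽 (fun l => coord (τ₀ l)) := by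
        exact hi5
      haveI : Nonempty (Fin d) := ⟨⟨0, hpos⟩⟩
      have hcard2 : Fintype.card (Fin d) = finrank 𝔽 (Fin d → 𝔽) := by
        simp [Module.finrank_fintype_fun_eq_card]
      let vb : Basis (Fin d) 𝔽 (Fin d → 𝔽) :=
        basisOfLinearIndependentOfCardEqFinrank hi6 hcard2
      have hNv : N τ₀ = (Pi.basisFun 𝔽 (Fin d)).toMatrix ⇑vb := by
        ext k l
        rw [Basis.toMatrix_apply, Pi.basisFun_repr,
          coe_basisOfLinearIndependentOfCardEqFinrank]
        rfl
      have hone := Basis.toMatrix_mul_toMatrix_flip (Pi.basisFun 𝔽 (Fin d)) vb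
      have : (N τ₀).det * (vb.toMatrix ⇑(Pi.basisFun 𝔽 (Fin d))).det = 1 := by
        rw [hNv, ← Matrix.det_mul, hone, Matrix.det_one]
      exact ⟨τ₀, left_ne_zero_of_mul_eq_one this⟩
  obtain ⟨τ₀, hτ₀⟩ := hex
  haveI : Nonempty (Fin d → Fin n) := ⟨τ₀⟩
  obtain ⟨τ, hτmax⟩ := Finite.exists_max (fun τ => ‖(N τ).det‖)
  have hdet : (N τ).det ≠ 0 := by
    intro h
    have h1 : (0:ℝ) < ‖(N τ₀).det‖ := norm_pos_iff.mpr hτ₀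
    have := hτmax τ₀
    rw [h] at this
    simp at this
    exact hτ₀ this
  have hdpos : (0:ℝ) < ‖(N τ).det‖ := norm_pos_iff.mpr hdet
  refine ⟨d, τ, fun j l => ((N τ).det)⁻¹ * Matrix.cramer (N τ) (coord j) l, le_refl _, ?_, ?_, ?_⟩
  · intro j l
    rw [norm_mul, norm_inv, Matrix.cramer_apply]
    have hupd : (N τ).updateCol l (coord j) = N (Function.update τ l j) := by
      ext k l'
      rw [Matrix.updateCol_apply]
      simp only [N, Matrix.of_apply, Function.update_apply]
      split <;> rfl
    rw [hupd]
    rw [inv_mul_le_iff₀ hdpos, mul_one]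
    exact hτmax _
  · intro j
    apply hvec τ j
    intro k
    have h1 := congrFun (Matrix.mulVec_cramer (N τ) (coord j)) k
    simp only [Matrix.mulVec, dotProduct, Pi.smul_apply, smul_eq_mul] at h1
    have : ∑ l, ((N τ).det⁻¹ * Matrix.cramer (N τ) (coord j) l) * coord (τ l) k
        = (N τ).det⁻¹ * ∑ l, (N τ) k l * Matrix.cramer (N τ) (coord j) l := by
      rw [Finset.mul_sum]
      congr 1
      ext l
      simp only [N, Matrix.of_apply]
      ring
    rw [this, h1]
    field_simp
  · intro l
    intro h0
    apply hdet
    apply Matrix.det_eq_zero_of_column_eq_zero l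
    intro k
    have : ub (τ l) = 0 := Subtype.ext h0
    simp only [N, Matrix.of_apply, coord, this]
    simp

def Statement14 (𝔽 : Type) [NormedField 𝔽] : Prop :=
  ∀ r : ℕ, 1 ≤ r → ∃ K : ℝ,
    ∀ α : ℝ, 0 < α → α ≤ 1 →
    ∀ (n : ℕ) (A : Matrix (Fin n) (Fin n) 𝔽), A.IsSymm → (∀ i j, ‖A i j‖ ≤ 1) →
      (∃ A' : Matrix (Fin n) (Fin n) 𝔽, A'.rank < r ∧
        ∑ i, ∑ j, ‖A i j - A' i j‖ ≤ α * (n : ℝ) ^ 2) →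
      ∃ H : Matrix (Fin n) (Fin n) 𝔽, H.IsSymm ∧ H.rank < r ∧
        ∑ i, ∑ j, ‖A i j - H i j‖ ≤ K * α ^ ((2 * (6 * (r : ℝ)) ^ r)⁻¹) * (n : ℝ) ^ 2

lemma key {𝔽 : Type} [NormedField 𝔽] (h20 : (2:𝔽) ≠ 0) (h2 : ‖(2:𝔽)⁻¹‖ ≤ 2⁻¹) :
    Statement14 𝔽 := by
  classical
  intro r hr
  refine ⟨(r : ℝ) + 4, ?_⟩
  intro α hα hα1 n A hA hA1 hex
  obtain ⟨A', hrank, hAA'⟩ := hex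
  -- the exponent
  set ε : ℝ := (2 * (6 * (r : ℝ)) ^ r)⁻¹ with hε
  have hε12 : ε ≤ 1/2 := by
    rw [hε]
    have h6r : (1:ℝ) ≤ 6 * (r:ℝ) := by
      have : (1:ℝ) ≤ (r:ℝ) := by exact_mod_cast hr
      nlinarith
    have hpow : (1:ℝ) ≤ (6 * (r:ℝ)) ^ r := one_le_pow₀ h6r
    rw [show (1:ℝ)/2 = (2:ℝ)⁻¹ by norm_num]
    apply inv_anti₀ (by norm_num)
    nlinarith
  have hsqrt_le : Real.sqrt α ≤ α ^ ε := by
    rw [Real.sqrt_eq_rpow]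
    exact Real.rpow_le_rpow_of_exponent_ge hα hα1 (by linarith)
  have hεpos : 0 ≤ α ^ ε := Real.rpow_nonneg (le_of_lt hα) ε
  -- trivial case n = 0
  rcases Nat.eq_zero_or_pos n with hn | hn
  · subst hn
    refine ⟨0, Matrix.isSymm_zero, ?_, ?_⟩
    · rw [Matrix.rank_zero]; omega
    · simp
  -- main case
  have hnr : (0:ℝ) < n := by exact_mod_cast hn
  set T : ℝ := Real.sqrt α * n with hT
  have hsqα : 0 < Real.sqrt α := Real.sqrt_pos.mpr hα
  have hTpos : 0 < T := mul_pos hsqα hnr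
  set colerr : Fin n → ℝ := fun j => ∑ i, ‖A i j - A' i j‖ with hcolerr
  set rowerr : Fin n → ℝ := fun j => ∑ i, ‖A j i - A' j i‖ with hrowerr
  set g : Fin n → ℝ := fun j => colerr j + rowerr j with hgdef
  have hcolnn : ∀ j, 0 ≤ colerr j := fun j => Finset.sum_nonneg fun i _ => norm_nonneg _
  have hrownn : ∀ j, 0 ≤ rowerr j := fun j => Finset.sum_nonneg fun i _ => norm_nonneg _
  have hgnn : ∀ j, 0 ≤ g j := fun j => add_nonneg (hcolnn j) (hrownn j)
  have hgsum : ∑ j, g j ≤ 2 * (α * (n:ℝ)^2) := by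
    have h1 : ∑ j, colerr j ≤ α * (n:ℝ)^2 := by
      rw [hcolerr]; rw [Finset.sum_comm]; exact hAA'
    have h2 : ∑ j, rowerr j ≤ α * (n:ℝ)^2 := hAA'
    rw [hgdef]
    rw [Finset.sum_add_distrib]
    linarith
  set G : Finset (Fin n) := Finset.univ.filter (fun j => g j ≤ T) with hG
  set Gc : Finset (Fin n) := Finset.univ.filter (fun j => ¬ g j ≤ T) with hGc
  have hGcc : ((Gc.card : ℝ)) ≤ 2 * Real.sqrt α * n := by
    have h1 : Gc.card • T ≤ ∑ j ∈ Gc, g j :=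
      Finset.card_nsmul_le_sum Gc g T
        (fun j hj => le_of_lt (lt_of_not_ge (Finset.mem_filter.mp hj).2))
    have h2 : ∑ j ∈ Gc, g j ≤ ∑ j, g j :=
      Finset.sum_le_sum_of_subset_of_nonneg (Finset.filter_subset _ _)
        (fun j _ _ => hgnn j)
    have h3 : (Gc.card : ℝ) * T ≤ 2 * (α * (n:ℝ)^2) := by
      rw [← nsmul_eq_mul]
      exact le_trans h1 (le_trans h2 hgsum)
    have h4 : (Gc.card : ℝ) ≤ 2 * (α * (n:ℝ)^2) / T := (le_div_iff₀ hTpos).mpr h3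
    refine le_trans h4 (le_of_eq ?_)
    have hαsq : Real.sqrt α * Real.sqrt α = α := Real.mul_self_sqrt hα.le
    rw [hT]
    field_simp
    linear_combination (-1:ℝ) * hαsq
  -- the column family
  set u : Fin n → (Fin n → 𝔽) := fun j => if j ∈ G then (fun i => A' i j) else 0 with hu
  obtain ⟨d, τ, c0, hdle0, hc0, hrepr, hne⟩ := exists_good_coords u
  have hd_le : d ≤ A'.rank := by
    refine le_trans hdle0 ?_
    have hle : Submodule.span 𝔽 (Set.range u) ≤ LinearMap.range A'.mulVecLin := by
      rw [Submodule.span_le]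
      rintro x ⟨j, rfl⟩
      by_cases hj : j ∈ G
      · refine ⟨Pi.single j 1, ?_⟩
        simp only [Matrix.mulVecLin_apply]
        rw [Matrix.mulVec_single]
        simp [hu, hj]
        rfl
      · have : u j = 0 := by simp [hu, hj]
        rw [this]
        exact (LinearMap.range A'.mulVecLin).zero_mem
    exact Submodule.finrank_mono hle
  have hdr : d < r := lt_of_le_of_lt hd_le hrank
  have hτG : ∀ l, τ l ∈ G := by
    intro l
    by_contra hj
    exact hne l (by simp [hu, hj])
  set cc : Fin n → Fin d → 𝔽 := fun j => if j ∈ G then c0 j else 0 with hcc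
  have hcc1 : ∀ j l, ‖cc j l‖ ≤ 1 := by
    intro j l
    rw [hcc]
    by_cases hj : j ∈ G
    · simp only [hj, if_pos]; exact hc0 j l
    · simp [hj]
  have hkey : ∀ j ∈ G, ∀ i, A' i j = ∑ l, cc j l * A' i (τ l) := by
    intro j hj i
    have h := congrFun (hrepr j) i
    simp only [Finset.sum_apply, Pi.smul_apply, smul_eq_mul] at h
    have h2 : ∀ l, u (τ l) i = A' i (τ l) := fun l => by simp [hu, hτG l]
    have h3 : u j i = A' i j := by simp [hu, hj]
    rw [h3] at h
    rw [h, hcc]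
    simp only [hj, if_pos]
    exact Finset.sum_congr rfl fun l _ => by rw [h2 l]
  set B : Fin n → Fin n → 𝔽 :=
    fun i j => ∑ k, ∑ l, cc i k * cc j l * A' (τ k) (τ l) with hB
  set H : Matrix (Fin n) (Fin n) 𝔽 :=
    Matrix.of (fun i j => (2:𝔽)⁻¹ * (B i j + B j i)) with hH
  refine ⟨H, ?_, ?_, ?_⟩
  · -- symmetry
    ext i j
    simp only [hH, Matrix.transpose_apply, Matrix.of_apply]
    ring
  · -- rank
    set Cmat : Matrix (Fin n) (Fin d) 𝔽 := Matrix.of (fun i k => cc i k) with hC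
    set S : Matrix (Fin d) (Fin d) 𝔽 :=
      Matrix.of (fun k l => (2:𝔽)⁻¹ * (A' (τ k) (τ l) + A' (τ l) (τ k))) with hS
    have hfac : H = Cmat * (S * Cmat.transpose) := by
      ext i j
      simp only [hH, Matrix.of_apply, Matrix.mul_apply, Matrix.transpose_apply, hC, hS, hB]
      have hswap : (∑ k, ∑ l, cc j k * cc i l * A' (τ k) (τ l))
          = ∑ k, ∑ l, cc j l * cc i k * A' (τ l) (τ k) := Finset.sum_comm
      rw [hswap, ← Finset.sum_add_distrib, Finset.mul_sum]
      refine Finset.sum_congr rfl fun k _ => ?_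
      rw [← Finset.sum_add_distrib, Finset.mul_sum, Finset.mul_sum]
      refine Finset.sum_congr rfl fun l _ => ?_
      ring
    rw [hfac]
    refine lt_of_le_of_lt ?_ hdr
    calc (Cmat * (S * Cmat.transpose)).rank ≤ Cmat.rank := Matrix.rank_mul_le_left _ _
    _ ≤ Fintype.card (Fin d) := Matrix.rank_le_card_width _
    _ = d := Fintype.card_fin d
  · -- the bound
    have hsymmA : ∀ a b : Fin n, A a b = A b a := by
      intro a b
      have := congrFun (congrFun hA b) a
      simpa using this
    have hBji : ∀ i ∈ G, ∀ j : Fin n, B j i = ∑ k, cc j k * A' (τ k) i := by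
      intro i hi j
      simp only [hB]
      refine Finset.sum_congr rfl fun k _ => ?_
      rw [hkey i hi (τ k), Finset.mul_sum]
      exact Finset.sum_congr rfl fun l _ => by ring
    have hB0r : ∀ i j : Fin n, i ∉ G → B i j = 0 := by
      intro i j hi
      simp only [hB]
      refine Finset.sum_eq_zero fun k _ => Finset.sum_eq_zero fun l _ => ?_
      have hz : cc i k = 0 := by simp [hcc, hi]
      rw [hz]; ring
    have hB0c : ∀ i j : Fin n, j ∉ G → B i j = 0 := by
      intro i j hj
      simp only [hB]
      refine Finset.sum_eq_zero fun k _ => Finset.sum_eq_zero fun l _ => ?_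
      have hz : cc j l = 0 := by simp [hcc, hj]
      rw [hz]; ring
    have hpt : ∀ i ∈ G, ∀ j ∈ G, ‖A i j - B j i‖ ≤ ‖A i j - A' i j‖
        + ((∑ k, ‖A i (τ k) - A' i (τ k)‖) + (∑ k, ‖A (τ k) i - A' (τ k) i‖)) := by
      intro i hi j hj
      have e1 : A' i j = ∑ k, cc j k * A' i (τ k) := hkey j hj i
      have e2 : B j i = ∑ k, cc j k * A' (τ k) i := hBji i hi j
      have hsy : ∀ k, A i (τ k) = A (τ k) i := fun k => hsymmA i (τ k)
      have decomp : A i j - B j i = (A i j - A' i j)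
          + ((∑ k, cc j k * (A' i (τ k) - A i (τ k)))
          + (∑ k, cc j k * (A (τ k) i - A' (τ k) i))) := by
        rw [e2, e1]
        simp only [mul_sub, Finset.sum_sub_distrib]
        simp only [hsy]
        ring
      rw [decomp]
      refine le_trans (norm_add_le _ _) ?_
      refine add_le_add le_rfl ?_
      refine le_trans (norm_add_le _ _) (add_le_add ?_ ?_)
      · refine le_trans (norm_sum_le _ _) (Finset.sum_le_sum fun k _ => ?_)
        rw [norm_mul, norm_sub_rev]
        exact mul_le_of_le_one_left (norm_nonneg _) (hcc1 j k)
      · refine le_trans (norm_sum_le _ _) (Finset.sum_le_sum fun k _ => ?_)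
        rw [norm_mul]
        exact mul_le_of_le_one_left (norm_nonneg _) (hcc1 j k)
    have hptH : ∀ i j : Fin n, ‖A i j - H i j‖
        ≤ 2⁻¹ * (‖A i j - B i j‖ + ‖A i j - B j i‖) := by
      intro i j
      have hid : A i j - H i j = (2:𝔽)⁻¹ * ((A i j - B i j) + (A i j - B j i)) := by
        simp only [hH, Matrix.of_apply]
        field_simp
        ring
      rw [hid, norm_mul]
      have hnn : (0:ℝ) ≤ ‖(A i j - B i j) + (A i j - B j i)‖ := norm_nonneg _
      refine le_trans (mul_le_mul_of_nonneg_right h2 hnn) ?_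
      have hadd := norm_add_le (A i j - B i j) (A i j - B j i)
      nlinarith [hadd]
    have hS12 : (∑ i, ∑ j, ‖A i j - B i j‖) = ∑ i, ∑ j, ‖A i j - B j i‖ := by
      have h1 : (∑ i, ∑ j, ‖A i j - B i j‖) = ∑ i, ∑ j, ‖A j i - B i j‖ := by
        refine Finset.sum_congr rfl fun i _ => Finset.sum_congr rfl fun j _ => ?_
        rw [hsymmA i j]
      rw [h1, Finset.sum_comm]
    have htot : (∑ i, ∑ j, ‖A i j - H i j‖) ≤ ∑ i, ∑ j, ‖A i j - B j i‖ := by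
      calc (∑ i, ∑ j, ‖A i j - H i j‖)
          ≤ ∑ i, ∑ j, (2⁻¹ * (‖A i j - B i j‖ + ‖A i j - B j i‖)) :=
            Finset.sum_le_sum fun i _ => Finset.sum_le_sum fun j _ => hptH i j
        _ = 2⁻¹ * ((∑ i, ∑ j, ‖A i j - B i j‖) + (∑ i, ∑ j, ‖A i j - B j i‖)) := by
            simp only [mul_add, Finset.sum_add_distrib, Finset.mul_sum]
        _ = ∑ i, ∑ j, ‖A i j - B j i‖ := by rw [hS12]; ring
    have hGcard : ((G.card : ℝ)) ≤ n := by
      have h : G.card ≤ n := by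
        rw [hG]
        simpa using Finset.card_filter_le Finset.univ (fun j => g j ≤ T)
      exact_mod_cast h
    have hp2 : ∀ i ∈ Gc, (∑ j, ‖A i j - B j i‖) ≤ (n:ℝ) := by
      intro i hi
      have hiG : i ∉ G := by
        intro hmem
        rw [hG] at hmem
        rw [hGc] at hi
        exact (Finset.mem_filter.mp hi).2 (Finset.mem_filter.mp hmem).2
      calc (∑ j, ‖A i j - B j i‖) = ∑ j, ‖A i j‖ := by
            refine Finset.sum_congr rfl fun j _ => by rw [hB0c j i hiG, sub_zero]
        _ ≤ ∑ _j : Fin n, (1:ℝ) := Finset.sum_le_sum fun j _ => hA1 i j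
        _ = n := by simp
    have h2tot : (∑ i ∈ Gc, ∑ j, ‖A i j - B j i‖) ≤ (Gc.card:ℝ) * n := by
      calc (∑ i ∈ Gc, ∑ j, ‖A i j - B j i‖) ≤ ∑ _i ∈ Gc, (n:ℝ) :=
            Finset.sum_le_sum hp2
        _ = (Gc.card:ℝ) * n := by rw [Finset.sum_const, nsmul_eq_mul]
    have hp1 : ∀ i ∈ G, (∑ j, ‖A i j - B j i‖)
        ≤ (∑ j ∈ G, ‖A i j - B j i‖) + (Gc.card:ℝ) := by
      intro i hi
      rw [← Finset.sum_filter_add_sum_filter_not Finset.univ (fun j => g j ≤ T)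
        (fun j => ‖A i j - B j i‖)]
      refine add_le_add (le_of_eq rfl) ?_
      calc (∑ j ∈ Finset.univ.filter (fun j => ¬ g j ≤ T), ‖A i j - B j i‖)
          = ∑ j ∈ Gc, ‖A i j - B j i‖ := by rw [hGc]
        _ = ∑ j ∈ Gc, ‖A i j‖ := by
            refine Finset.sum_congr rfl fun j hj => ?_
            have hjG : j ∉ G := by
              intro hmem
              rw [hG] at hmem
              rw [hGc] at hj
              exact (Finset.mem_filter.mp hj).2 (Finset.mem_filter.mp hmem).2
            rw [hB0r j i hjG, sub_zero]
        _ ≤ ∑ _j ∈ Gc, (1:ℝ) := Finset.sum_le_sum fun j _ => hA1 i j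
        _ = (Gc.card:ℝ) := by rw [Finset.sum_const, nsmul_eq_mul, mul_one]
    have hpart1 : (∑ i ∈ G, ∑ j ∈ G, ‖A i j - A' i j‖) ≤ α * (n:ℝ)^2 := by
      refine le_trans ?_ hAA'
      refine le_trans (Finset.sum_le_sum fun i _ =>
        Finset.sum_le_sum_of_subset_of_nonneg (Finset.filter_subset _ _)
          fun j _ _ => norm_nonneg _) ?_
      exact Finset.sum_le_sum_of_subset_of_nonneg (Finset.filter_subset _ _)
        fun i _ _ => Finset.sum_nonneg fun j _ => norm_nonneg _
    have hΦle : (∑ i ∈ G, ((∑ k, ‖A i (τ k) - A' i (τ k)‖)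
        + (∑ k, ‖A (τ k) i - A' (τ k) i‖))) ≤ (d:ℝ) * T := by
      rw [Finset.sum_add_distrib]
      have hc : (∑ i ∈ G, ∑ k, ‖A i (τ k) - A' i (τ k)‖)
          = ∑ k, ∑ i ∈ G, ‖A i (τ k) - A' i (τ k)‖ := Finset.sum_comm
      have hrr : (∑ i ∈ G, ∑ k, ‖A (τ k) i - A' (τ k) i‖)
          = ∑ k, ∑ i ∈ G, ‖A (τ k) i - A' (τ k) i‖ := Finset.sum_comm
      rw [hc, hrr, ← Finset.sum_add_distrib]
      have hterm : ∀ k : Fin d, ((∑ i ∈ G, ‖A i (τ k) - A' i (τ k)‖)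
          + ∑ i ∈ G, ‖A (τ k) i - A' (τ k) i‖) ≤ T := by
        intro k
        have hkG := hτG k
        have hgk : g (τ k) ≤ T := by
          rw [hG] at hkG
          exact (Finset.mem_filter.mp hkG).2
        refine le_trans ?_ hgk
        rw [hgdef]
        refine add_le_add ?_ ?_
        · rw [hcolerr]
          exact Finset.sum_le_sum_of_subset_of_nonneg (Finset.filter_subset _ _)
            fun i _ _ => norm_nonneg _
        · rw [hrowerr]
          exact Finset.sum_le_sum_of_subset_of_nonneg (Finset.filter_subset _ _)
            fun i _ _ => norm_nonneg _
      calc (∑ k : Fin d, ((∑ i ∈ G, ‖A i (τ k) - A' i (τ k)‖)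
            + ∑ i ∈ G, ‖A (τ k) i - A' (τ k) i‖)) ≤ ∑ _k : Fin d, T :=
            Finset.sum_le_sum fun k _ => hterm k
        _ = (d:ℝ) * T := by rw [Finset.sum_const, nsmul_eq_mul, Finset.card_univ,
              Fintype.card_fin]
    have hpart2 : (∑ i ∈ G, ∑ _j ∈ G, ((∑ k, ‖A i (τ k) - A' i (τ k)‖)
        + (∑ k, ‖A (τ k) i - A' (τ k) i‖))) ≤ (n:ℝ) * ((d:ℝ) * T) := by
      have hΦnn : ∀ i : Fin n, (0:ℝ) ≤ ((∑ k, ‖A i (τ k) - A' i (τ k)‖)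
          + (∑ k, ‖A (τ k) i - A' (τ k) i‖)) := fun i =>
        add_nonneg (Finset.sum_nonneg fun k _ => norm_nonneg _)
          (Finset.sum_nonneg fun k _ => norm_nonneg _)
      calc (∑ i ∈ G, ∑ _j ∈ G, ((∑ k, ‖A i (τ k) - A' i (τ k)‖)
            + (∑ k, ‖A (τ k) i - A' (τ k) i‖)))
          = ∑ i ∈ G, (G.card:ℝ) * ((∑ k, ‖A i (τ k) - A' i (τ k)‖)
            + (∑ k, ‖A (τ k) i - A' (τ k) i‖)) := by
            refine Finset.sum_congr rfl fun i _ => ?_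
            rw [Finset.sum_const, nsmul_eq_mul]
        _ ≤ ∑ i ∈ G, (n:ℝ) * ((∑ k, ‖A i (τ k) - A' i (τ k)‖)
            + (∑ k, ‖A (τ k) i - A' (τ k) i‖)) :=
            Finset.sum_le_sum fun i _ => mul_le_mul_of_nonneg_right hGcard (hΦnn i)
        _ = (n:ℝ) * ∑ i ∈ G, ((∑ k, ‖A i (τ k) - A' i (τ k)‖)
            + (∑ k, ‖A (τ k) i - A' (τ k) i‖)) := by rw [Finset.mul_sum]
        _ ≤ (n:ℝ) * ((d:ℝ) * T) := mul_le_mul_of_nonneg_left hΦle (by positivity)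
    have hGG : (∑ i ∈ G, ∑ j ∈ G, ‖A i j - B j i‖)
        ≤ α * (n:ℝ)^2 + (n:ℝ) * ((d:ℝ) * T) := by
      calc (∑ i ∈ G, ∑ j ∈ G, ‖A i j - B j i‖)
          ≤ ∑ i ∈ G, ∑ j ∈ G, (‖A i j - A' i j‖ + ((∑ k, ‖A i (τ k) - A' i (τ k)‖)
            + (∑ k, ‖A (τ k) i - A' (τ k) i‖))) :=
            Finset.sum_le_sum fun i hi => Finset.sum_le_sum fun j hj => hpt i hi j hj
        _ = (∑ i ∈ G, ∑ j ∈ G, ‖A i j - A' i j‖)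
            + ∑ i ∈ G, ∑ _j ∈ G, ((∑ k, ‖A i (τ k) - A' i (τ k)‖)
            + (∑ k, ‖A (τ k) i - A' (τ k) i‖)) := by
            simp only [Finset.sum_add_distrib]
        _ ≤ α * (n:ℝ)^2 + (n:ℝ) * ((d:ℝ) * T) := add_le_add hpart1 hpart2
    have hcore : (∑ i, ∑ j, ‖A i j - B j i‖)
        ≤ α * (n:ℝ)^2 + (n:ℝ) * ((d:ℝ) * T) + 2 * (Gc.card:ℝ) * n := by
      rw [← Finset.sum_filter_add_sum_filter_not Finset.univ (fun i => g i ≤ T)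
        (fun i => ∑ j, ‖A i j - B j i‖)]
      have e1 : (∑ i ∈ Finset.univ.filter (fun i => g i ≤ T), ∑ j, ‖A i j - B j i‖)
          = ∑ i ∈ G, ∑ j, ‖A i j - B j i‖ := by rw [hG]
      have e2 : (∑ i ∈ Finset.univ.filter (fun i => ¬ g i ≤ T), ∑ j, ‖A i j - B j i‖)
          = ∑ i ∈ Gc, ∑ j, ‖A i j - B j i‖ := by rw [hGc]
      rw [e1, e2]
      have hA1' : (∑ i ∈ G, ∑ j, ‖A i j - B j i‖)
          ≤ (∑ i ∈ G, ∑ j ∈ G, ‖A i j - B j i‖) + (G.card:ℝ) * Gc.card := by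
        calc (∑ i ∈ G, ∑ j, ‖A i j - B j i‖)
            ≤ ∑ i ∈ G, ((∑ j ∈ G, ‖A i j - B j i‖) + (Gc.card:ℝ)) :=
              Finset.sum_le_sum hp1
          _ = (∑ i ∈ G, ∑ j ∈ G, ‖A i j - B j i‖) + (G.card:ℝ) * Gc.card := by
              rw [Finset.sum_add_distrib, Finset.sum_const, nsmul_eq_mul]
      have hGcnn : (0:ℝ) ≤ (Gc.card:ℝ) := Nat.cast_nonneg _
      nlinarith [hGG, hA1', h2tot, hGcard, hGcnn, hnr]
    refine le_trans htot (le_trans hcore ?_)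
    have hd1 : (d:ℝ) ≤ (r:ℝ) - 1 := by
      have hh : d + 1 ≤ r := hdr
      have : ((d:ℝ)) + 1 ≤ (r:ℝ) := by exact_mod_cast hh
      linarith
    have hsq1 : Real.sqrt α ≤ 1 := Real.sqrt_le_one.mpr hα1
    have hαsq : Real.sqrt α * Real.sqrt α = α := Real.mul_self_sqrt hα.le
    have hα_le : α ≤ Real.sqrt α := by nlinarith [Real.sqrt_nonneg α]
    have hmain : α * (n:ℝ)^2 + (n:ℝ) * ((d:ℝ) * T) + 2 * (Gc.card:ℝ) * n
        ≤ ((r:ℝ)+4) * Real.sqrt α * (n:ℝ)^2 := by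
      rw [hT]
      have t1 : α * (n:ℝ)^2 ≤ Real.sqrt α * (n:ℝ)^2 :=
        mul_le_mul_of_nonneg_right hα_le (sq_nonneg _)
      have t2 : (n:ℝ) * ((d:ℝ) * (Real.sqrt α * n))
          ≤ (n:ℝ) * (((r:ℝ)-1) * (Real.sqrt α * n)) := by
        have h0 : (0:ℝ) ≤ Real.sqrt α * n := by positivity
        have := mul_le_mul_of_nonneg_right hd1 h0
        nlinarith [hnr.le]
      have t3 : 2 * (Gc.card:ℝ) * n ≤ 2 * (2 * Real.sqrt α * n) * n := by
        nlinarith [hGcc, hnr.le]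
      nlinarith [t1, t2, t3, hnr.le]
    refine le_trans hmain ?_
    have hrpos : (0:ℝ) ≤ (r:ℝ) + 4 := by positivity
    have := mul_le_mul_of_nonneg_left hsqrt_le hrpos
    nlinarith [this, sq_nonneg ((n:ℝ))]

theorem statement14 : Statement14 ℂ ∧ Statement14 ℝ ∧ Statement14 ℚ := by
  refine ⟨key two_ne_zero ?_, key two_ne_zero ?_, key two_ne_zero ?_⟩
  · rw [norm_inv]
    norm_num
  · rw [norm_inv]
    norm_num
  · rw [norm_inv, ← Rat.norm_cast_real]
    norm_num
end

section
/- Let 𝔽 be one of ℂ, ℝ, ℚ. Let 0 ≤ ε ≤ 1 and 0 ≤ δ ≤ 1, let q ≥ 0 be an integer, and let M be a q×n matrix over 𝔽 whose rows are (ε + q(q−1)δ)-independent and all of whose entries have absolute value at most 1. Let G be a graph on the vertex set [n] in which every vertex has degree at most δn. Then there exists a q-element independent set I ⊆ [n] of G such that the q×q matrix M_I satisfies |det M_I| ≥ ε^q. -/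
def Statement16 (𝔽 : Type) [NormedField 𝔽] : Prop :=
  ∀ ε δ : ℝ, 0 ≤ ε → ε ≤ 1 → 0 ≤ δ → δ ≤ 1 →
  ∀ (q n : ℕ) (M : Matrix (Fin q) (Fin n) 𝔽),
    -- the rows of `M` are `(ε + q(q−1)δ)`-independent
    EpsIndependent 𝔽 (ε + (q : ℝ) * ((q : ℝ) - 1) * δ) (fun a => M a) →
    (∀ i j, ‖M i j‖ ≤ 1) →
    ∀ G : SimpleGraph (Fin n),
      -- every vertex of `G` has degree at most `δn`
      (∀ v : Fin n, (Nat.card {u : Fin n | G.Adj v u} : ℝ) ≤ δ * n) →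
      ∃ (I : Finset (Fin n)) (hI : I.card = q),
        -- `I` is an independent set of `G`
        (∀ i ∈ I, ∀ j ∈ I, ¬ G.Adj i j) ∧
        -- and `|det M_I| ≥ ε^q`
        ε ^ q ≤ ‖(Matrix.of fun a b => M a (↑(I.orderIsoOfFin hI b))).det‖

lemma epsIndependent_li {𝔽 : Type*} [NormedField 𝔽] {q n : ℕ} {ε : ℝ} (hε : 0 ≤ ε)
    {v : Fin q → Fin n → 𝔽} (h : EpsIndependent 𝔽 ε v) : LinearIndependent 𝔽 v := by
  by_contra hd
  exact h ⟨v, hd, by simp [mul_nonneg hε (Nat.cast_nonneg n)]⟩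

lemma sum_castLE {𝔽 : Type*} [AddCommMonoid 𝔽] {k q : ℕ} (hk : k ≤ q) (F : Fin q → 𝔽)
    (hF : ∀ i : Fin q, ¬ (i : ℕ) < k → F i = 0) :
    ∑ i : Fin q, F i = ∑ i : Fin k, F (Fin.castLE hk i) := by
  have h1 : ∑ x ∈ Finset.univ.map (Fin.castLEEmb hk), F x = ∑ i : Fin k, F (Fin.castLE hk i) := by
    rw [Finset.sum_map]; rfl
  rw [← h1]
  symm
  apply Finset.sum_subset (Finset.subset_univ _)
  intro x _ hx
  apply hF
  intro hlt
  exact hx (Finset.mem_map.mpr ⟨⟨x, hlt⟩, Finset.mem_univ _, rfl⟩)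

set_option maxHeartbeats 2000000 in
lemma statement16_gen (𝔽 : Type) [NormedField 𝔽] : Statement16 𝔽 := by
  classical
  intro ε δ hε0 hε1 hδ0 hδ1 q n M hind hM G hdeg
  have hq2 : (0:ℝ) ≤ (q : ℝ) * ((q : ℝ) - 1) := by
    rcases Nat.eq_zero_or_pos q with h | h
    · simp [h]
    · have h1 : (1:ℝ) ≤ q := by exact_mod_cast h
      nlinarith
  have hε' : 0 ≤ ε + (q : ℝ) * ((q : ℝ) - 1) * δ := by nlinarith
  have hli : LinearIndependent 𝔽 (fun a => M a) := epsIndependent_li hε' hind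
  have hqn : q ≤ n := by
    have := hli.fintype_card_le_finrank
    simpa [Module.finrank_fin_fun] using this
  -- degree bound as a Finset
  have hdeg' : ∀ v : Fin n, ((Finset.univ.filter (fun u => G.Adj v u)).card : ℝ) ≤ δ * n := by
    intro v
    have := hdeg v
    rwa [Nat.card_eq_fintype_card, Fintype.card_subtype] at this
  -- the main induction
  have key : ∀ k : ℕ, ∀ hk : k ≤ q, ∃ f : Fin k → Fin n, Function.Injective f ∧
      (∀ a b, ¬ G.Adj (f a) (f b)) ∧
      ε ^ k ≤ ‖(Matrix.of fun i l => M (Fin.castLE hk i) (f l)).det‖ := by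
    intro k
    induction k with
    | zero =>
      intro hk
      refine ⟨Fin.elim0, fun a => a.elim0, fun a => a.elim0, ?_⟩
      simp [Matrix.det_fin_zero]
    | succ k ih =>
      intro hk
      have hk' : k ≤ q := Nat.le_of_succ_le hk
      obtain ⟨f, hfi, hfa, hfd⟩ := ih hk'
      set A : Matrix (Fin k) (Fin k) 𝔽 := Matrix.of fun i l => M (Fin.castLE hk' i) (f l) with hA
      set D : 𝔽 := A.det with hD
      set N : Fin n → Matrix (Fin (k+1)) (Fin (k+1)) 𝔽 :=
        fun j => Matrix.of fun i l => M (Fin.castLE hk i) ((Fin.snoc f j : Fin (k+1) → Fin n) l) with hN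
      have claim : ∃ j : Fin n, (∀ a, ¬ G.Adj (f a) j) ∧ j ∉ Set.range f ∧
          ε * ‖D‖ ≤ ‖(N j).det‖ := by
        by_contra hcon
        push_neg at hcon
        -- cofactors
        set c : Fin (k+1) → 𝔽 := fun i =>
          (-1) ^ ((i : ℕ) + k) *
            (Matrix.of fun a l => M (Fin.castLE hk (i.succAbove a)) (f l)).det with hc
        have hexp : ∀ j, (N j).det = ∑ i, c i * M (Fin.castLE hk i) j := by
          intro j
          rw [Matrix.det_succ_column (N j) (Fin.last k)]
          refine Finset.sum_congr rfl ?_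
          intro i _
          have h1 : (N j) i (Fin.last k) = M (Fin.castLE hk i) j := by
            simp [hN]
          have h2 : (N j).submatrix i.succAbove (Fin.last k).succAbove =
              Matrix.of fun a l => M (Fin.castLE hk (i.succAbove a)) (f l) := by
            rw [Fin.succAbove_last]
            ext a l
            simp [hN]
          rw [h1, h2]
          simp only [hc, Fin.val_last]
          ring
        have hclast : c (Fin.last k) = D := by
          have h2 : (Matrix.of fun a l => M (Fin.castLE hk ((Fin.last k).succAbove a)) (f l)) = A := by
            rw [Fin.succAbove_last]
            ext a l
            simp [hA]
          rw [hc]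
          simp only [Fin.val_last, h2]
          rw [← hD]
          have : ((-1 : 𝔽)) ^ (k + k) = 1 := Even.neg_one_pow ⟨k, rfl⟩
          rw [this, one_mul]
        -- bad columns
        set Bad : Finset (Fin n) := Finset.univ.filter (fun j => ∃ a, G.Adj (f a) j) with hBad
        have hbadcard : (Bad.card : ℝ) ≤ (k : ℝ) * (δ * n) := by
          have hsub : Bad ⊆ Finset.univ.biUnion
              (fun a : Fin k => Finset.univ.filter (fun u => G.Adj (f a) u)) := by
            intro j hj
            rw [hBad, Finset.mem_filter] at hj
            obtain ⟨-, a, ha⟩ := hj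
            exact Finset.mem_biUnion.mpr ⟨a, Finset.mem_univ _, Finset.mem_filter.mpr ⟨Finset.mem_univ _, ha⟩⟩
          calc (Bad.card : ℝ) ≤ ((Finset.univ.biUnion
              (fun a : Fin k => Finset.univ.filter (fun u => G.Adj (f a) u))).card : ℝ) := by
                exact_mod_cast Finset.card_le_card hsub
            _ ≤ ∑ a : Fin k, ((Finset.univ.filter (fun u => G.Adj (f a) u)).card : ℝ) := by
                exact_mod_cast Finset.card_biUnion_le
            _ ≤ ∑ _a : Fin k, δ * n := Finset.sum_le_sum (fun a _ => hdeg' (f a))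
            _ = (k : ℝ) * (δ * n) := by simp [mul_comm]
        by_cases hgood : ∃ j : Fin n, (∀ a, ¬ G.Adj (f a) j) ∧ j ∉ Set.range f
        · -- there is an allowed column; all allowed columns have small new determinant
          obtain ⟨j₀, hj₀a, hj₀r⟩ := hgood
          have hpos : 0 < ε * ‖D‖ := lt_of_le_of_lt (norm_nonneg _) (hcon j₀ hj₀a hj₀r)
          have hεpos : 0 < ε := by nlinarith [norm_nonneg D]
          have hDpos : 0 < ‖D‖ := by nlinarith
          have hDne : D ≠ 0 := by
            intro h; rw [h] at hDpos; simp at hDpos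
          -- construct the perturbed family
          set v' : Fin q → Fin n → 𝔽 := fun i j =>
            if ∃ a, G.Adj (f a) j then (if (i : ℕ) ≤ k then 0 else M i j)
            else if (i : ℕ) = k then M i j - (N j).det / D else M i j with hv'
          set g : Fin q → 𝔽 := fun i => if h : (i : ℕ) < k + 1 then c ⟨i, h⟩ else 0 with hg
          have hkq : k < q := hk
          have hgl : g (Fin.castLE hk (Fin.last k)) = D := by
            rw [hg]
            simp only [Fin.coe_castLE, Fin.val_last]
            rw [dif_pos (Nat.lt_succ_self k)]
            rw [← hclast]
            rfl
          have hsum : ∑ i, g i • v' i = 0 := by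
            funext j
            rw [Finset.sum_apply]
            simp only [Pi.smul_apply, smul_eq_mul]
            rw [sum_castLE hk (fun i => g i * v' i j) ?side]
            case side =>
              intro i hi
              rw [hg]
              simp only
              rw [dif_neg hi, zero_mul]
            have hgc : ∀ i : Fin (k+1), g (Fin.castLE hk i) = c i := by
              intro i
              rw [hg]
              simp only [Fin.coe_castLE]
              rw [dif_pos i.isLt]
            by_cases hbj : ∃ a, G.Adj (f a) j
            · apply Finset.sum_eq_zero
              intro i _
              have : v' (Fin.castLE hk i) j = 0 := by
                rw [hv']
                simp only [if_pos hbj, Fin.coe_castLE]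
                rw [if_pos (Nat.lt_succ_iff.mp i.isLt)]
              rw [this, mul_zero]
            · have hterm : ∀ i : Fin (k+1),
                  g (Fin.castLE hk i) * v' (Fin.castLE hk i) j =
                  c i * M (Fin.castLE hk i) j - (if i = Fin.last k then (N j).det else 0) := by
                intro i
                rw [hgc]
                by_cases hik : i = Fin.last k
                · subst hik
                  rw [hv']
                  simp only [if_neg hbj, Fin.coe_castLE, Fin.val_last, if_pos rfl, if_pos rfl, if_true]
                  rw [hclast]
                  field_simp
                · have hik' : ((Fin.castLE hk i : Fin q) : ℕ) ≠ k := by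
                    simp only [Fin.coe_castLE]
                    intro h
                    exact hik (Fin.ext (by simp [h]))
                  rw [hv']
                  simp only [if_neg hbj, if_neg hik', if_neg hik]
                  ring
              rw [Finset.sum_congr rfl (fun i _ => hterm i)]
              rw [Finset.sum_sub_distrib, Finset.sum_ite_eq' Finset.univ (Fin.last k)
                (fun _ => (N j).det)]
              rw [← hexp j]
              simp
          have hnli : ¬ LinearIndependent 𝔽 v' := by
            intro hLI
            have := Fintype.linearIndependent_iff.mp hLI g hsum (Fin.castLE hk (Fin.last k))
            rw [hgl] at this
            exact hDne this
          -- the cost bound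
          have hcost : ∑ i, ∑ j, ‖M i j - v' i j‖ ≤ (ε + (q : ℝ) * ((q : ℝ) - 1) * δ) * n := by
            rw [Finset.sum_comm]
            have hjb : ∀ j : Fin n, ∑ i, ‖M i j - v' i j‖ ≤
                if ∃ a, G.Adj (f a) j then (q : ℝ) else ε := by
              intro j
              by_cases hbj : ∃ a, G.Adj (f a) j
              · rw [if_pos hbj]
                calc ∑ i, ‖M i j - v' i j‖ ≤ ∑ _i : Fin q, (1:ℝ) := by
                      apply Finset.sum_le_sum
                      intro i _
                      rw [hv']
                      simp only [if_pos hbj]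
                      by_cases hik : (i : ℕ) ≤ k
                      · rw [if_pos hik, sub_zero]; exact hM i j
                      · rw [if_neg hik, sub_self, norm_zero]; norm_num
                  _ = (q : ℝ) := by simp
              · rw [if_neg hbj]
                have hterm : ∀ i : Fin q, ‖M i j - v' i j‖ =
                    if i = Fin.castLE hk (Fin.last k) then ‖(N j).det / D‖ else 0 := by
                  intro i
                  by_cases hik : i = Fin.castLE hk (Fin.last k)
                  · subst hik
                    rw [hv']
                    simp only [if_neg hbj, Fin.coe_castLE, Fin.val_last, if_pos rfl, if_pos rfl, if_true]
                    rw [sub_sub_cancel]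
                  · have hik' : ((i : Fin q) : ℕ) ≠ k := by
                      intro h
                      exact hik (Fin.ext (by simp [h]))
                    rw [hv']
                    simp only [if_neg hbj, if_neg hik', if_neg hik, sub_self, norm_zero]
                rw [Finset.sum_congr rfl (fun i _ => hterm i)]
                rw [Finset.sum_ite_eq' Finset.univ (Fin.castLE hk (Fin.last k))
                  (fun _ => ‖(N j).det / D‖)]
                rw [if_pos (Finset.mem_univ _)]
                rw [norm_div]
                rw [div_le_iff₀ hDpos]
                by_cases hjr : j ∈ Set.range f
                · obtain ⟨a, ha⟩ := hjr
                  have hdup : (N j).det = 0 := by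
                    rw [← Matrix.det_transpose]
                    apply Matrix.det_zero_of_row_eq (i := Fin.castSucc a) (j := Fin.last k)
                    · exact Fin.ne_of_lt (Fin.castSucc_lt_last a)
                    · funext i
                      simp [hN, ha]
                  rw [hdup, norm_zero]
                  positivity
                · push_neg at hbj
                  exact le_of_lt (hcon j hbj hjr)
            calc ∑ j, ∑ i, ‖M i j - v' i j‖ ≤
                ∑ j : Fin n, (if ∃ a, G.Adj (f a) j then (q : ℝ) else ε) :=
                  Finset.sum_le_sum (fun j _ => hjb j)
              _ = (q : ℝ) * Bad.card + ε * (Finset.univ.filter (fun j => ¬ ∃ a, G.Adj (f a) j)).card := by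
                  rw [Finset.sum_ite, hBad]
                  simp [mul_comm]
              _ ≤ (q : ℝ) * ((k:ℝ) * (δ * n)) + ε * n := by
                  have h1 : ((Finset.univ.filter (fun j => ¬ ∃ a, G.Adj (f a) j)).card : ℝ) ≤ n := by
                    exact_mod_cast (Finset.card_filter_le _ _).trans_eq (Finset.card_univ.trans (Fintype.card_fin n))
                  have h2 : (0:ℝ) ≤ q := Nat.cast_nonneg q
                  nlinarith [hbadcard, hεpos.le]
              _ ≤ (ε + (q : ℝ) * ((q : ℝ) - 1) * δ) * n := by
                  have hkq1 : (k : ℝ) ≤ (q : ℝ) - 1 := by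
                    have : (k:ℝ) + 1 ≤ q := by exact_mod_cast hk
                    linarith
                  have hδn : (0:ℝ) ≤ δ * n := mul_nonneg hδ0 (Nat.cast_nonneg n)
                  have h2 : (0:ℝ) ≤ q := Nat.cast_nonneg q
                  nlinarith [mul_le_mul_of_nonneg_right (mul_le_mul_of_nonneg_left hkq1 h2) hδn]
          exact hind ⟨v', hnli, hcost⟩
        · -- no allowed column at all: every column is bad or already chosen
          push_neg at hgood
          have hcover : (Finset.univ : Finset (Fin n)) ⊆ Bad ∪ Finset.univ.image f := by
            intro j _
            by_cases hbj : ∃ a, G.Adj (f a) j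
            · exact Finset.mem_union_left _ (Finset.mem_filter.mpr ⟨Finset.mem_univ _, hbj⟩)
            · push_neg at hbj
              obtain ⟨a, ha⟩ := hgood j hbj
              exact Finset.mem_union_right _ (Finset.mem_image.mpr ⟨a, Finset.mem_univ _, ha⟩)
          have hncard : (n : ℝ) ≤ (k : ℝ) * (δ * n) + k := by
            have h1 : (Finset.univ : Finset (Fin n)).card ≤ Bad.card + (Finset.univ.image f).card :=
              (Finset.card_le_card hcover).trans (Finset.card_union_le _ _)
            have h2 : (Finset.univ.image f).card ≤ k := by
              calc (Finset.univ.image f).card ≤ (Finset.univ : Finset (Fin k)).card :=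
                    Finset.card_image_le
                _ = k := by simp
            have h3 : (n : ℝ) ≤ (Bad.card : ℝ) + k := by
              have := h1.trans (Nat.add_le_add_left h2 _)
              have h4 : (Finset.univ : Finset (Fin n)).card = n := by simp
              rw [h4] at this
              exact_mod_cast this
            linarith [hbadcard]
          -- zero out the first row to get a dependent family with small cost
          have hq1 : 0 < q := Nat.lt_of_le_of_lt (Nat.zero_le k) hk
          set r0 : Fin q := ⟨0, hq1⟩ with hr0
          set v' : Fin q → Fin n → 𝔽 := fun i j => if i = r0 then 0 else M i j with hv'
          have hnli : ¬ LinearIndependent 𝔽 v' := by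
            intro hLI
            have := hLI.ne_zero r0
            apply this
            funext j
            simp [hv']
          have hcost : ∑ i, ∑ j, ‖M i j - v' i j‖ ≤ (ε + (q : ℝ) * ((q : ℝ) - 1) * δ) * n := by
            have hterm : ∀ i : Fin q, ∑ j, ‖M i j - v' i j‖ =
                if i = r0 then ∑ j, ‖M r0 j‖ else 0 := by
              intro i
              by_cases hi : i = r0
              · subst hi; simp [hv']
              · simp [hv', hi]
            rw [Finset.sum_congr rfl (fun i _ => hterm i), Finset.sum_ite_eq' Finset.univ r0
              (fun _ => ∑ j, ‖M r0 j‖), if_pos (Finset.mem_univ _)]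
            have h1 : ∑ j, ‖M r0 j‖ ≤ (n : ℝ) := by
              calc ∑ j, ‖M r0 j‖ ≤ ∑ _j : Fin n, (1:ℝ) := Finset.sum_le_sum (fun j _ => hM r0 j)
                _ = n := by simp
            have hkq1 : (k : ℝ) ≤ (q : ℝ) - 1 := by
              have : (k:ℝ) + 1 ≤ q := by exact_mod_cast hk
              linarith
            have hq1' : (1:ℝ) ≤ q := by exact_mod_cast hq1
            have hqn' : (q:ℝ) ≤ n := by exact_mod_cast hqn
            have hδn : (0:ℝ) ≤ δ * n := mul_nonneg hδ0 (Nat.cast_nonneg n)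
            -- n ≤ k δ n + k ≤ (q-1) δ n + (q-1) hence q(q-1)δ n ≥ q (n - q + 1) ≥ n
            have hkey : (n : ℝ) ≤ (q : ℝ) * ((q : ℝ) - 1) * δ * n := by
              have e1 : (n:ℝ) - ((q:ℝ)-1) ≤ ((q:ℝ)-1)*(δ*n) := by
                have := mul_le_mul_of_nonneg_right hkq1 hδn
                nlinarith
              have e2 : (q:ℝ)*((n:ℝ) - ((q:ℝ)-1)) ≤ (q:ℝ)*(((q:ℝ)-1)*(δ*n)) :=
                mul_le_mul_of_nonneg_left e1 (by positivity)
              have e3 : (n:ℝ) ≤ (q:ℝ)*((n:ℝ)-((q:ℝ)-1)) := by nlinarith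
              nlinarith
            linarith [mul_nonneg hε0 (show (0:ℝ) ≤ (n:ℝ) from Nat.cast_nonneg n)]
          exact hind ⟨v', hnli, hcost⟩
      -- use the claim to extend
      obtain ⟨j, hja, hjr, hjd⟩ := claim
      refine ⟨Fin.snoc f j, ?_, ?_, ?_⟩
      · -- injectivity
        intro a b hab
        rcases Fin.eq_castSucc_or_eq_last a with ⟨a', rfl⟩ | rfl <;>
          rcases Fin.eq_castSucc_or_eq_last b with ⟨b', rfl⟩ | rfl
        · rw [Fin.snoc_castSucc, Fin.snoc_castSucc] at hab
          exact congrArg Fin.castSucc (hfi hab)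
        · rw [Fin.snoc_castSucc, Fin.snoc_last] at hab
          exact absurd ⟨a', hab⟩ hjr
        · rw [Fin.snoc_last, Fin.snoc_castSucc] at hab
          exact absurd ⟨b', hab.symm⟩ hjr
        · rfl
      · -- independence in G
        intro a b
        rcases Fin.eq_castSucc_or_eq_last a with ⟨a', rfl⟩ | rfl <;>
          rcases Fin.eq_castSucc_or_eq_last b with ⟨b', rfl⟩ | rfl
        · rw [Fin.snoc_castSucc, Fin.snoc_castSucc]; exact hfa a' b'
        · rw [Fin.snoc_castSucc, Fin.snoc_last]; exact hja a'
        · rw [Fin.snoc_last, Fin.snoc_castSucc]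
          intro h; exact hja b' h.symm
        · rw [Fin.snoc_last]; exact G.loopless.irrefl j
      · -- determinant bound
        calc ε ^ (k+1) = ε * ε ^ k := by ring
          _ ≤ ε * ‖D‖ := by
              exact mul_le_mul_of_nonneg_left hfd hε0
          _ ≤ ‖(N j).det‖ := hjd
          _ = _ := rfl
  -- final assembly at k = q
  obtain ⟨f, hfi, hfa, hfd⟩ := key q le_rfl
  refine ⟨Finset.univ.image f, ?_, ?_, ?_⟩
  · rw [Finset.card_image_of_injective _ hfi]; simp
  · intro i hi j hj
    obtain ⟨a, -, rfl⟩ := Finset.mem_image.mp hi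
    obtain ⟨b, -, rfl⟩ := Finset.mem_image.mp hj
    exact hfa a b
  · set I : Finset (Fin n) := Finset.univ.image f with hI'
    set hI : I.card = q := by rw [hI', Finset.card_image_of_injective _ hfi]; simp
    set t : Fin q ≃ ↥I := ((Finset.univ.image f).orderIsoOfFin hI).toEquiv with ht
    have hmem : ∀ b : Fin q, f b ∈ I := fun b => Finset.mem_image.mpr ⟨b, Finset.mem_univ _, rfl⟩
    have hsinj : Function.Injective (fun b : Fin q => (⟨f b, hmem b⟩ : ↥I)) := by
      intro a b hab
      exact hfi (congrArg Subtype.val hab)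
    have hsbij : Function.Bijective (fun b : Fin q => (⟨f b, hmem b⟩ : ↥I)) := by
      rw [Fintype.bijective_iff_injective_and_card]
      refine ⟨hsinj, ?_⟩
      simp [Fintype.card_coe, hI]
    set s : Fin q ≃ ↥I := Equiv.ofBijective _ hsbij with hs
    set σ : Equiv.Perm (Fin q) := t.trans s.symm with hσ
    have hfσ : ∀ b : Fin q, f (σ b) = ↑(I.orderIsoOfFin hI b) := by
      intro b
      have : (⟨f (σ b), hmem _⟩ : ↥I) = t b := by
        rw [hσ]; exact s.apply_symm_apply (t b)
      exact congrArg Subtype.val this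
    have hAeq : (Matrix.of fun a b => M a (↑(I.orderIsoOfFin hI b))) =
        ((Matrix.of fun i l => M (Fin.castLE le_rfl i) (f l)).transpose.submatrix (⇑σ) id).transpose := by
      ext a b
      simp [Matrix.submatrix, hfσ b, Fin.castLE]
    rw [hAeq, Matrix.det_transpose, Matrix.det_permute]
    rcases Int.units_eq_one_or (Equiv.Perm.sign σ) with h | h <;>
      rw [h] <;> simp only [Units.val_one, Units.val_neg, Int.cast_one, Int.cast_neg, one_mul,
        neg_one_mul, norm_neg] <;>
      rw [Matrix.det_transpose] <;> exact hfd

theorem statement16 : Statement16 ℂ ∧ Statement16 ℝ ∧ Statement16 ℚ :=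
  ⟨statement16_gen ℂ, statement16_gen ℝ, statement16_gen ℚ⟩
end

section
/- Let 𝔽 be one of ℂ, ℝ, ℚ. Let 0 ≤ ε ≤ 1 and let v₁,…,v_q ∈ 𝔽ⁿ be ε-dependent vectors with ‖v_i‖∞ ≤ 1 for each i. Then there exist linearly dependent vectors v₁',…,v_q' ∈ 𝔽ⁿ with ‖v₁−v₁'‖₁ + … + ‖v_q−v_q'‖₁ ≤ εn and such that all entries of v₁',…,v_q' have absolute value at most q+1. -/
def Statement17 (𝔽 : Type) [NormedField 𝔽] : Prop :=
  ∀ ε : ℝ, 0 ≤ ε → ε ≤ 1 → ∀ (q n : ℕ) (v : Fin q → Fin n → 𝔽),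
    -- `v₁,…,v_q` are `ε`-dependent
    ¬ EpsIndependent 𝔽 ε v →
    (∀ i j, ‖v i j‖ ≤ 1) →
    ∃ v' : Fin q → Fin n → 𝔽, ¬ LinearIndependent 𝔽 v' ∧
      (∑ i, ∑ j, ‖v i j - v' i j‖) ≤ ε * n ∧
      ∀ i j, ‖v' i j‖ ≤ (q : ℝ) + 1

theorem statement17_general (𝔽 : Type) [NormedField 𝔽] : Statement17 𝔽 := by
  intro ε hε0 hε1 q n v hdep hbd
  rw [EpsIndependent, not_not] at hdep
  obtain ⟨v', hv'dep, hcost⟩ := hdep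
  rw [Fintype.not_linearIndependent_iff] at hv'dep
  obtain ⟨g, hg0, k, hgk⟩ := hv'dep
  obtain ⟨m, -, hm⟩ := Finset.exists_max_image Finset.univ (fun i => ‖g i‖)
    ⟨k, Finset.mem_univ k⟩
  have hgm : g m ≠ 0 := by
    intro h
    apply hgk
    have h1 := hm k (Finset.mem_univ k)
    rw [h, norm_zero] at h1
    exact norm_le_zero_iff.mp h1
  set c : Fin q → 𝔽 := fun i => g i / g m with hc
  have hc1 : ∀ i, ‖c i‖ ≤ 1 := by
    intro i
    rw [hc]
    simp only [norm_div]
    rw [div_le_one (norm_pos_iff.mpr hgm)]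
    exact hm i (Finset.mem_univ i)
  have hcm : c m = 1 := div_self hgm
  have hrel : ∀ j, ∑ i, c i * v' i j = 0 := by
    intro j
    have h1 := congrFun hg0 j
    simp only [Finset.sum_apply, Pi.smul_apply, smul_eq_mul, Pi.zero_apply] at h1
    calc ∑ i, c i * v' i j = (g m)⁻¹ * ∑ i, g i * v' i j := by
          rw [Finset.mul_sum]
          refine Finset.sum_congr rfl fun i _ => ?_
          rw [hc]; ring
      _ = 0 := by rw [h1, mul_zero]
  set w : Fin q → Fin n → 𝔽 :=
    Function.update v m (fun j => v m j - ∑ i, c i * v i j) with hw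
  have hwm : ∀ j, w m j = v m j - ∑ i, c i * v i j := by
    intro j; rw [hw, Function.update_self]
  have hwi : ∀ i, i ≠ m → w i = v i := fun i h => Function.update_of_ne h _ _
  have hsum0 : ∀ j, ∑ i, c i * w i j = 0 := by
    intro j
    have h1 : ∑ i, (c i * w i j - c i * v i j) = c m * (w m j - v m j) := by
      rw [Finset.sum_eq_single m (fun i _ hi => by rw [hwi i hi]; ring)
        (fun h => absurd (Finset.mem_univ m) h)]
      ring
    rw [Finset.sum_sub_distrib, hwm j, hcm] at h1
    linear_combination h1
  have hSle : ∀ j, ‖∑ i, c i * v i j‖ ≤ ∑ i, ‖v i j - v' i j‖ := by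
    intro j
    have heq : ∑ i, c i * v i j = ∑ i, c i * (v i j - v' i j) := by
      have : ∑ i, c i * (v i j - v' i j)
          = ∑ i, c i * v i j - ∑ i, c i * v' i j := by
        rw [← Finset.sum_sub_distrib]
        exact Finset.sum_congr rfl fun i _ => by ring
      rw [this, hrel j, sub_zero]
    rw [heq]
    calc ‖∑ i, c i * (v i j - v' i j)‖ ≤ ∑ i, ‖c i * (v i j - v' i j)‖ :=
          norm_sum_le _ _
      _ ≤ ∑ i, ‖v i j - v' i j‖ := by
          refine Finset.sum_le_sum fun i _ => ?_
          rw [norm_mul]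
          calc ‖c i‖ * ‖v i j - v' i j‖ ≤ 1 * ‖v i j - v' i j‖ :=
                mul_le_mul_of_nonneg_right (hc1 i) (norm_nonneg _)
            _ = ‖v i j - v' i j‖ := one_mul _
  refine ⟨w, ?_, ?_, ?_⟩
  · rw [Fintype.not_linearIndependent_iff]
    refine ⟨c, ?_, m, by rw [hcm]; exact one_ne_zero⟩
    funext j
    simpa using hsum0 j
  · have hcost2 : ∑ i, ∑ j, ‖v i j - w i j‖ = ∑ j, ‖∑ i, c i * v i j‖ := by
      rw [Finset.sum_eq_single m (fun i _ hi => by rw [hwi i hi]; simp)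
        (fun h => absurd (Finset.mem_univ m) h)]
      refine Finset.sum_congr rfl fun j _ => ?_
      rw [hwm j, sub_sub_cancel]
    rw [hcost2]
    calc ∑ j, ‖∑ i, c i * v i j‖ ≤ ∑ j, ∑ i, ‖v i j - v' i j‖ :=
          Finset.sum_le_sum fun j _ => hSle j
      _ = ∑ i, ∑ j, ‖v i j - v' i j‖ := Finset.sum_comm
      _ ≤ ε * n := hcost
  · intro i j
    by_cases hi : i = m
    · subst hi
      rw [hwm j]
      calc ‖v i j - ∑ i', c i' * v i' j‖
          ≤ ‖v i j‖ + ‖∑ i', c i' * v i' j‖ := norm_sub_le _ _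
        _ ≤ 1 + ∑ i', ‖c i' * v i' j‖ :=
            add_le_add (hbd i j) (norm_sum_le _ _)
        _ ≤ 1 + ∑ _i' : Fin q, (1 : ℝ) := by
            refine add_le_add le_rfl (Finset.sum_le_sum fun i' _ => ?_)
            rw [norm_mul]
            calc ‖c i'‖ * ‖v i' j‖ ≤ 1 * 1 :=
                  mul_le_mul (hc1 i') (hbd i' j) (norm_nonneg _) zero_le_one
              _ = 1 := one_mul 1
        _ = (q : ℝ) + 1 := by simp [add_comm]
    · rw [hwi i hi]
      have := hbd i j
      have hq : (0:ℝ) ≤ q := Nat.cast_nonneg q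
      linarith

theorem statement17 : Statement17 ℂ ∧ Statement17 ℝ ∧ Statement17 ℚ := by
  exact ⟨statement17_general ℂ, statement17_general ℝ, statement17_general ℚ⟩
end

section
/- Let 𝔽 be a field (in the paper, one of ℂ, ℝ, ℚ). Let v₁,…,v_q ∈ 𝔽ⁿ, let M be the q×n matrix with rows v₁,…,v_q, and let I ⊆ [n] be a subset of size q such that the q×q matrix M_I is invertible. Let H = (h_{ij})_{i,j} ∈ 𝔽^{n×n} be a matrix each of whose rows lies in the linear span of v₁,…,v_q, and suppose h_{ij} = h_{ji} for all i ∈ I and all j ∈ [n]. Then H is symmetric. -/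
theorem statement19 {𝔽 : Type*} [Field 𝔽] (q n : ℕ) (v : Fin q → Fin n → 𝔽)
    (I : Finset (Fin n)) (hI : I.card = q)
    -- the `q × q` matrix `M_I` (columns of the matrix `M` with rows `v₁,…,v_q` indexed by `I`)
    -- is invertible
    (hdet : (Matrix.of fun a b => v a (↑(I.orderIsoOfFin hI b))).det ≠ 0)
    (H : Matrix (Fin n) (Fin n) 𝔽)
    -- each row of `H` lies in the span of `v₁,…,v_q`
    (hrows : ∀ i, (fun j => H i j) ∈ Submodule.span 𝔽 (Set.range v))
    -- `h_{ij} = h_{ji}` for all `i ∈ I` and all `j`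
    (hsym : ∀ i ∈ I, ∀ j, H i j = H j i) :
    H.IsSymm := by
  set ι : Fin q → Fin n := fun b => ↑(I.orderIsoOfFin hI b) with hι
  set A : Matrix (Fin q) (Fin q) 𝔽 := Matrix.of fun a b => v a (ι b) with hA
  have hinv : IsUnit A.det := isUnit_iff_ne_zero.mpr hdet
  set lam : Fin n → Fin q → 𝔽 := fun k => A⁻¹.mulVec (fun a => v a k) with hlam
  have hmemI : ∀ b, ι b ∈ I := fun b => (I.orderIsoOfFin hI b).2
  have key : ∀ w ∈ Submodule.span 𝔽 (Set.range v),
      ∀ k, w k = ∑ b, lam k b * w (ι b) := by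
    intro w hw
    induction hw using Submodule.span_induction with
    | mem x hx =>
      obtain ⟨a, rfl⟩ := hx
      intro k
      have h1 : A.mulVec (lam k) = fun a => v a k := by
        rw [hlam, Matrix.mulVec_mulVec, Matrix.mul_nonsing_inv _ hinv, Matrix.one_mulVec]
      have h2 := congrFun h1 a
      simp only [Matrix.mulVec, dotProduct, hA, Matrix.of_apply] at h2
      rw [← h2]
      exact Finset.sum_congr rfl fun b _ => mul_comm _ _
    | zero => simp
    | add x y hx hy ihx ihy =>
      intro k
      simp only [Pi.add_apply, ihx k, ihy k, mul_add, Finset.sum_add_distrib]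
    | smul c x hx ih =>
      intro k
      simp only [Pi.smul_apply, smul_eq_mul, ih k, Finset.mul_sum]
      exact Finset.sum_congr rfl fun b _ => by ring
  have e1 : ∀ j k, H j k = ∑ b, ∑ c, lam k b * lam j c * H (ι b) (ι c) := by
    intro j k
    rw [key _ (hrows j) k]
    refine Finset.sum_congr rfl fun b _ => ?_
    rw [← hsym (ι b) (hmemI b) j, key _ (hrows (ι b)) j, Finset.mul_sum]
    exact Finset.sum_congr rfl fun c _ => by ring
  rw [Matrix.IsSymm]
  ext k j
  simp only [Matrix.transpose_apply]
  rw [e1 j k, e1 k j, Finset.sum_comm]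
  refine Finset.sum_congr rfl fun b _ => Finset.sum_congr rfl fun c _ => ?_
  rw [hsym (ι c) (hmemI c) (ι b)]
  ring
end
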